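/- arXiv:1707.05234 — 2 statements merged into one kernel-verified Lean document; each statement's English description precedes it below -/
import Mathlib

section
/- Let Z^k be an F^k-adapted pure-jump process, let 0 ≤ n ≤ r, and let τ be any F-stopping time with T^k_n ≤ τ ≤ T^k_r a.s. Define Q(τ) := min{ T^k_p : p ≥ 0, T^k_p > τ } and η(τ) := Σ_{ℓ=n}^{r+1} T^k_{ℓ−1} 1{Q(τ) = T^k_ℓ}. Then Q(τ) is an F-stopping time, P{η(τ) = T^k_{n−1}} = 0 (so η(τ) takes values in {T^k_n, …, T^k_r} a.s.), and Z^k(τ ∧ T) = Z^k(η(τ) ∧ T) almost surely. -/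
open MeasureTheory ProbabilityTheory Filter Set
open scoped ENNReal NNReal Topology Classical

noncomputable section
set_option linter.unusedSectionVars false

variable {Ω : Type} [MeasurableSpace Ω]

/-- One-dimensional standard Brownian motion: measurable in space, starting at `0`,
with a.s. continuous paths, Gaussian increments of variance `t - s`, and independent
increments. -/
structure IsBM (P : Measure Ω) (B : ℝ → Ω → ℝ) : Prop where
  meas : ∀ t, Measurable (B t)
  start : ∀ᵐ ω ∂P, B 0 ω = 0
  cont : ∀ᵐ ω ∂P, Continuous fun t => B t ω
  gauss : ∀ s t : ℝ, 0 ≤ s → s ≤ t →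
    P.map (fun ω => B t ω - B s ω) = gaussianReal 0 ((t - s).toNNReal)
  indep : ∀ u : ℕ → ℝ, Monotone u → (∀ i, 0 ≤ u i) →
    iIndepFun (fun i ω => B (u (i + 1)) ω - B (u i) ω) P

/-- The hitting times `T^k_n`: `T^k_0 = 0` and
`T^k_{n+1} = inf {t > T^k_n : |B(t) - B(T^k_n)| = ε}`. -/
def hitT (B : ℝ → Ω → ℝ) (ε : ℝ) : ℕ → Ω → ℝ
  | 0 => fun _ => 0
  | n + 1 => fun ω =>
      sInf {t : ℝ | hitT B ε n ω < t ∧ |B t ω - B (hitT B ε n ω) ω| = ε}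

/-- The sign `σ^k_n` of the `n`-th increment of `B` along the hitting times. -/
def wSign (B : ℝ → Ω → ℝ) (ε : ℝ) (n : ℕ) (ω : Ω) : ℝ :=
  if 0 < B (hitT B ε n ω) ω - B (hitT B ε (n - 1) ω) ω then 1 else -1

/-- The continuous-time random walk `A^k(t) = Σ_{n ≥ 1} ε σ^k_n 1{T^k_n ≤ t}`. -/
def walk (B : ℝ → Ω → ℝ) (ε : ℝ) (t : ℝ) (ω : Ω) : ℝ :=
  ∑' n : ℕ, if hitT B ε (n + 1) ω ≤ t then ε * wSign B ε (n + 1) ω else 0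

/-- A `d`-dimensional Brownian motion: independent one-dimensional coordinates. -/
structure IsBMd {d : ℕ} (P : Measure Ω) (B : Fin d → ℝ → Ω → ℝ) : Prop where
  coord : ∀ j, IsBM P (B j)
  indepCoord : iIndepFun
    (fun (j : Fin d) (ω : Ω) => fun t => B j t ω) P

/-- The increasing rearrangement `T^k_n` of the family of coordinatewise hitting times
`{T^{k,j}_m : m ≥ 1, 1 ≤ j ≤ d}`, with `T^k_0 = 0`. -/
def merged {d : ℕ} (Tj : Fin d → ℕ → Ω → ℝ) : ℕ → Ω → ℝ
  | 0 => fun _ => 0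
  | n + 1 => fun ω =>
      sInf {t : ℝ | merged Tj n ω < t ∧ ∃ j : Fin d, ∃ m : ℕ, 1 ≤ m ∧ Tj j m ω = t}

/-- The merged hitting times `T^k_n` of a `d`-dimensional Brownian motion. -/
def mT {d : ℕ} (B : Fin d → ℝ → Ω → ℝ) (ε : ℝ) : ℕ → Ω → ℝ :=
  merged fun j => hitT (B j) ε

/-- The number of steps `e(k,T) = d⌈ε_k^{-2} T⌉`. -/
def nSteps (d : ℕ) (ε T : ℝ) : ℕ := d * ⌈T / ε ^ 2⌉₊

/-- The natural filtration of a real-valued process. -/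
def natFilt (A : ℝ → Ω → ℝ) (t : ℝ) : MeasurableSpace Ω :=
  ⨆ s ∈ Iic t, MeasurableSpace.comap (A s) inferInstance

/-- The product filtration `F^k_t` generated by the coordinate random walks `A^{k,j}`. -/
def walkFilt {d : ℕ} (B : Fin d → ℝ → Ω → ℝ) (ε : ℝ) (t : ℝ) : MeasurableSpace Ω :=
  ⨆ j : Fin d, natFilt (walk (B j) ε) t

/-- `τ` is a stopping time for the filtration `F`. -/
def IsStopTime (F : ℝ → MeasurableSpace Ω) (τ : Ω → ℝ) : Prop :=
  ∀ t : ℝ, MeasurableSet[F t] {ω | τ ω ≤ t}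

/-- The σ-algebra `F_τ` of a stopping time `τ` for the filtration `F`. -/
def stopσ (F : ℝ → MeasurableSpace Ω) (τ : Ω → ℝ) : MeasurableSpace Ω :=
  MeasurableSpace.generateFrom
    {A : Set Ω | ∀ t : ℝ, MeasurableSet[F t] (A ∩ {ω | τ ω ≤ t})}

/-- The σ-algebra generated by the `P`-null sets. -/
def nullσ (P : Measure Ω) : MeasurableSpace Ω :=
  MeasurableSpace.generateFrom {A : Set Ω | P A = 0}

/-- The usual `P`-augmentation `(F_t)` of the natural filtration of the Brownian motion. -/
def augFilt {d : ℕ} (P : Measure Ω) (B : Fin d → ℝ → Ω → ℝ) (t : ℝ) :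
    MeasurableSpace Ω :=
  (⨆ j : Fin d, natFilt (B j) t) ⊔ nullσ P

/-- The set of F-stopping times with values in `[0,T]`, i.e. `𝒯_0(F)`. -/
def brownianStopTimes {d : ℕ} (P : Measure Ω) (B : Fin d → ℝ → Ω → ℝ) (T : ℝ) :
    Set (Ω → ℝ) :=
  {τ | IsStopTime (augFilt P B) τ ∧ ∀ ω, τ ω ∈ Icc (0 : ℝ) T}

/-- Membership in `D^k_{0,T}`: stopping times of the form `η ∧ T` where `η` is an
`F^k`-stopping time taking values in `{T^k_0, T^k_1, …}`. -/
def memDk {d : ℕ} (B : Fin d → ℝ → Ω → ℝ) (ε T : ℝ) (τ : Ω → ℝ) : Prop :=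
  ∃ η : Ω → ℝ, IsStopTime (walkFilt B ε) η ∧ (∀ ω, ∃ i : ℕ, η ω = mT B ε i ω) ∧
    τ = fun ω => min (η ω) T

/-- `Z^k` is an `F^k`-adapted pure-jump process along the times `T^k_n`. -/
def IsPureJump {d : ℕ} (B : Fin d → ℝ → Ω → ℝ) (ε : ℝ) (Zk : ℝ → Ω → ℝ) : Prop :=
  (∀ t : ℝ, 0 ≤ t → Measurable[walkFilt B ε t] (Zk t)) ∧
    ∀ ω, ∀ t : ℝ, ∀ n : ℕ, mT B ε n ω ≤ t → t < mT B ε (n + 1) ω →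
      Zk t ω = Zk (mT B ε n ω) ω

/-- The backward dynamic-programming recursion, written as a recursion on the number of
remaining steps: `snellAux … 0 = g N` and
`snellAux … (m+1) = max (g (N-(m+1))) E[snellAux … m | 𝒢 (N-(m+1))]`. -/
def snellAux (P : Measure Ω) (G : ℕ → MeasurableSpace Ω) (g : ℕ → Ω → ℝ) (N : ℕ) :
    ℕ → Ω → ℝ
  | 0 => g N
  | m + 1 => fun ω =>
      max (g (N - (m + 1)) ω) ((P[snellAux P G g N m | G (N - (m + 1))]) ω)

/-- The value process `V_n` of the backward dynamic-programming recursion: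
`V_N = g N` and `V_n = max (g n) E[V_{n+1} | 𝒢 n]` for `n < N`. -/
def snell (P : Measure Ω) (G : ℕ → MeasurableSpace Ω) (g : ℕ → Ω → ℝ) (N n : ℕ) :
    Ω → ℝ :=
  snellAux P G g N (N - n)

/-- The discrete σ-algebras `F^k_{T^k_n}`. -/
def Gn {d : ℕ} (B : Fin d → ℝ → Ω → ℝ) (ε : ℝ) (n : ℕ) : MeasurableSpace Ω :=
  stopσ (walkFilt B ε) (mT B ε n)

/-- The optimal stopping index `τ^k_n = min{n ≤ j ≤ N : V_j = g j}`. -/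
def stopIdx (V g : ℕ → Ω → ℝ) (n N : ℕ) (ω : Ω) : ℕ :=
  sInf {j : ℕ | n ≤ j ∧ j ≤ N ∧ V j ω = g j ω}

/-- `Q(τ) = min{T^k_p : T^k_p > τ}`, the first merged hitting time strictly after `τ`. -/
def Qtime {d : ℕ} (B : Fin d → ℝ → Ω → ℝ) (ε : ℝ) (τ : Ω → ℝ) (ω : Ω) : ℝ :=
  sInf {t : ℝ | (∃ p : ℕ, mT B ε p ω = t) ∧ τ ω < t}

/-- `η(τ) = Σ_{ℓ=n}^{r+1} T^k_{ℓ−1} 1{Q(τ) = T^k_ℓ}`. -/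
def etaTime {d : ℕ} (B : Fin d → ℝ → Ω → ℝ) (ε : ℝ) (τ : Ω → ℝ) (n r : ℕ) (ω : Ω) :
    ℝ :=
  ∑ ℓ ∈ Finset.Icc n (r + 1),
    if Qtime B ε τ ω = mT B ε ℓ ω then mT B ε (ℓ - 1) ω else 0


/-! ### Auxiliary development -/

section AuxDev

variable {d : ℕ} {P : Measure Ω} {B : Fin d → ℝ → Ω → ℝ} {ε : ℝ}

lemma measurableSet_nullσ {A : Set Ω} (h : P A = 0) : MeasurableSet[nullσ P] A :=
  MeasurableSpace.measurableSet_generateFrom h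

lemma nullσ_le_augFilt (P : Measure Ω) (B : Fin d → ℝ → Ω → ℝ) (t : ℝ) :
    nullσ P ≤ augFilt P B t := le_sup_right

lemma natFilt_mono {A : ℝ → Ω → ℝ} {s t : ℝ} (h : s ≤ t) : natFilt A s ≤ natFilt A t := by
  unfold natFilt
  exact biSup_mono fun x hx => le_trans hx h

lemma augFilt_mono (P : Measure Ω) (B : Fin d → ℝ → Ω → ℝ) {s t : ℝ} (h : s ≤ t) :
    augFilt P B s ≤ augFilt P B t := by
  unfold augFilt
  exact sup_le_sup_right (iSup_mono fun j => natFilt_mono h) _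

lemma measurable_B_augFilt (P : Measure Ω) (B : Fin d → ℝ → Ω → ℝ) {s t : ℝ} (hs : s ≤ t)
    (j : Fin d) : Measurable[augFilt P B t] (fun ω => B j s ω) := by
  apply measurable_iff_comap_le.2
  calc MeasurableSpace.comap (B j s) inferInstance
      ≤ natFilt (B j) t := by
        unfold natFilt
        exact le_biSup (fun s => MeasurableSpace.comap (B j s) inferInstance) hs
    _ ≤ ⨆ j : Fin d, natFilt (B j) t := le_iSup (fun j => natFilt (B j) t) j
    _ ≤ augFilt P B t := le_sup_left

lemma measurableSet_augFilt_of_diff (t : ℝ) {A S : Set Ω}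
    (hS : MeasurableSet[augFilt P B t] S) (h1 : P (A \ S) = 0) (h2 : P (S \ A) = 0) :
    MeasurableSet[augFilt P B t] A := by
  have e : A = (S \ (S \ A)) ∪ (A \ S) := by
    ext x; by_cases hx : x ∈ S <;> simp [hx]
  rw [e]
  exact (hS.diff (nullσ_le_augFilt P B t _ (measurableSet_nullσ h2))).union
    (nullσ_le_augFilt P B t _ (measurableSet_nullσ h1))

/-! #### Pointwise path lemmas for `hitT` -/

lemma isLeast_hit (hε : 0 < ε) {f : ℝ → ℝ} (hc : Continuous f) {a : ℝ}
    (hosc : ∃ t, a < t ∧ ε ≤ |f t - f a|) :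
    IsLeast {t : ℝ | a < t ∧ |f t - f a| = ε} (sInf {t : ℝ | a < t ∧ |f t - f a| = ε}) := by
  set g : ℝ → ℝ := fun u => |f u - f a| with hg
  have hgc : Continuous g := (hc.sub continuous_const).abs
  have hga : g a = 0 := by simp [hg]
  obtain ⟨t0, hat0, ht0⟩ := hosc
  -- nonempty by IVT
  have hne : {t : ℝ | a < t ∧ |f t - f a| = ε}.Nonempty := by
    have hsub := intermediate_value_Icc (le_of_lt hat0) hgc.continuousOn
    have hmem : ε ∈ Icc (g a) (g t0) := by
      constructor
      · rw [hga]; exact le_of_lt hε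
      · exact ht0
    obtain ⟨u, hu, hgu⟩ := hsub hmem
    refine ⟨u, ?_, hgu⟩
    rcases lt_or_eq_of_le hu.1 with h | h
    · exact h
    · exfalso; rw [← h, hga] at hgu; exact (ne_of_gt hε) hgu.symm
  -- δ from continuity at a
  obtain ⟨δ, hδ, hδP⟩ : ∃ δ > 0, ∀ x : ℝ, |x - a| < δ → g x < ε := by
    obtain ⟨δ, hδ, h⟩ := Metric.continuousAt_iff.1 (hgc.continuousAt (x := a)) ε hε
    refine ⟨δ, hδ, fun x hx => ?_⟩
    have := h (x := x) (by rwa [Real.dist_eq])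
    rw [Real.dist_eq, hga, sub_zero] at this
    calc g x ≤ |g x| := le_abs_self _
      _ < ε := this
  have hset : {t : ℝ | a < t ∧ |f t - f a| = ε} = {t : ℝ | a + δ ≤ t ∧ g t = ε} := by
    ext u
    simp only [mem_setOf_eq]
    constructor
    · rintro ⟨h1, h2⟩
      refine ⟨?_, h2⟩
      by_contra hlt
      push_neg at hlt
      have : |u - a| < δ := by
        rw [abs_of_pos (by linarith)]; linarith
      exact absurd h2 (ne_of_lt (hδP u this))
    · rintro ⟨h1, h2⟩
      exact ⟨by linarith, h2⟩
  have hclosed : IsClosed {t : ℝ | a < t ∧ |f t - f a| = ε} := by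
    rw [hset]
    exact (isClosed_le continuous_const continuous_id).inter (isClosed_eq hgc continuous_const)
  have hbdd : BddBelow {t : ℝ | a < t ∧ |f t - f a| = ε} :=
    ⟨a, fun x hx => le_of_lt hx.1⟩
  exact ⟨hclosed.csInf_mem hne hbdd, fun x hx => csInf_le hbdd hx⟩

/-- Structure of the hitting times along a continuous, oscillating path. -/
lemma hitT_struct {b : ℝ → Ω → ℝ} {ω : Ω} (hε : 0 < ε)
    (hc : Continuous fun t => b t ω)
    (hosc : ∀ a, 0 ≤ a → ∃ t, a < t ∧ ε ≤ |b t ω - b a ω|) :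
    ∀ m : ℕ, 0 ≤ hitT b ε m ω ∧
      IsLeast {t : ℝ | hitT b ε m ω < t ∧ |b t ω - b (hitT b ε m ω) ω| = ε}
        (hitT b ε (m + 1) ω) := by
  intro m
  induction m with
  | zero =>
      refine ⟨le_refl _, ?_⟩
      exact isLeast_hit hε hc (hosc _ (le_refl _))
  | succ m ih =>
      have h1 : 0 ≤ hitT b ε (m + 1) ω := le_of_lt (lt_of_le_of_lt ih.1 ih.2.1.1)
      exact ⟨h1, isLeast_hit hε hc (hosc _ h1)⟩

lemma hitT_strictMono {b : ℝ → Ω → ℝ} {ω : Ω} (hε : 0 < ε)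
    (hc : Continuous fun t => b t ω)
    (hosc : ∀ a, 0 ≤ a → ∃ t, a < t ∧ ε ≤ |b t ω - b a ω|) :
    StrictMono fun m => hitT b ε m ω :=
  strictMono_nat_of_lt_succ fun m => (hitT_struct hε hc hosc m).2.1.1

lemma hitT_unbounded {b : ℝ → Ω → ℝ} {ω : Ω} (hε : 0 < ε)
    (hc : Continuous fun t => b t ω)
    (hosc : ∀ a, 0 ≤ a → ∃ t, a < t ∧ ε ≤ |b t ω - b a ω|) :
    ∀ M : ℝ, ∃ m : ℕ, M < hitT b ε m ω := by
  intro M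
  by_contra hcon
  push_neg at hcon
  set h : ℕ → ℝ := fun m => hitT b ε m ω with hh
  have hmono : Monotone h := (hitT_strictMono hε hc hosc).monotone
  have hbdd : BddAbove (range h) := ⟨M, by rintro x ⟨m, rfl⟩; exact hcon m⟩
  set L : ℝ := ⨆ m, h m with hL
  have htend : Tendsto h atTop (𝓝 L) := tendsto_atTop_ciSup hmono hbdd
  obtain ⟨δ, hδ, hδP⟩ : ∃ δ > 0, ∀ x : ℝ, |x - L| < δ → |b x ω - b L ω| < ε / 2 := by
    obtain ⟨δ, h1, h2⟩ := Metric.continuousAt_iff.1 (hc.continuousAt (x := L)) (ε / 2) (by linarith)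
    exact ⟨δ, h1, fun x hx => by
      have := h2 (x := x) (by rwa [Real.dist_eq]); rwa [Real.dist_eq] at this⟩
  obtain ⟨N, hN⟩ := (Metric.tendsto_atTop.1 htend) δ hδ
  have hNd : |h N - L| < δ := by have := hN N (le_refl _); rwa [Real.dist_eq] at this
  have hN1d : |h (N + 1) - L| < δ := by
    have := hN (N + 1) (Nat.le_succ _); rwa [Real.dist_eq] at this
  have habs : |b (h (N + 1)) ω - b (h N) ω| = ε := (hitT_struct hε hc hosc N).2.1.2
  have h1 := hδP _ hNd
  have h2 := hδP _ hN1d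
  have : |b (h (N + 1)) ω - b (h N) ω| < ε := by
    calc |b (h (N + 1)) ω - b (h N) ω|
        ≤ |b (h (N + 1)) ω - b L ω| + |b L ω - b (h N) ω| := abs_sub_le _ _ _
      _ < ε / 2 + ε / 2 := by rw [abs_sub_comm (b L ω)]; exact add_lt_add h2 h1
      _ = ε := by ring
  rw [habs] at this
  exact lt_irrefl _ this

/-- Oscillation of the path from infinitely many large integer increments. -/
lemma osc_of_big_increments {f : ℝ → ℝ} (hε : 0 < ε)
    (hbig : ∀ nn : ℕ, ∃ i : ℕ, nn ≤ i ∧ 2 * ε < |f ((i : ℝ) + 1) - f (i : ℝ)|) :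
    ∀ a : ℝ, 0 ≤ a → ∃ t, a < t ∧ ε ≤ |f t - f a| := by
  intro a ha
  obtain ⟨i, hi, hbigi⟩ := hbig ⌈a⌉₊
  have hia : a ≤ (i : ℝ) := le_trans (Nat.le_ceil a) (Nat.cast_le.2 hi)
  by_cases hcase : ε ≤ |f ((i : ℝ) + 1) - f a|
  · exact ⟨(i : ℝ) + 1, by linarith, hcase⟩
  · push_neg at hcase
    have key : ε < |f (i : ℝ) - f a| := by
      have : |f ((i : ℝ) + 1) - f (i : ℝ)| ≤ |f ((i : ℝ) + 1) - f a| + |f a - f (i : ℝ)| :=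
        abs_sub_le _ _ _
      rw [abs_sub_comm (f a)] at this
      linarith
    have hne : a ≠ (i : ℝ) := by
      intro h
      rw [← h, sub_self, abs_zero] at key
      linarith
    exact ⟨(i : ℝ), lt_of_le_of_ne hia hne, le_of_lt key⟩


/-! #### Pointwise structure of the merged times `mT` -/

/-- The set of coordinatewise hitting times (with positive index) of `ω`. -/
def hitSet (B : Fin d → ℝ → Ω → ℝ) (ε : ℝ) (ω : Ω) : Set ℝ :=
  {t | ∃ j : Fin d, ∃ m : ℕ, 1 ≤ m ∧ hitT (B j) ε m ω = t}

lemma hitSet_inter_finite {ω : Ω}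
    (hmono : ∀ j : Fin d, Monotone fun m => hitT (B j) ε m ω)
    (hub : ∀ j : Fin d, ∀ M : ℝ, ∃ m, M < hitT (B j) ε m ω) (M : ℝ) :
    (hitSet B ε ω ∩ Iic M).Finite := by
  classical
  choose m0 hm0 using fun j => hub j M
  have hidx : {p : Fin d × ℕ | p.2 ≤ m0 p.1}.Finite := by
    refine Set.Finite.subset (Set.finite_univ.prod (Set.finite_Iic (Finset.univ.sup m0)))
      fun p hp => ?_
    simp only [mem_setOf_eq] at hp
    exact ⟨mem_univ _, mem_Iic.2 (le_trans hp (Finset.le_sup (Finset.mem_univ p.1)))⟩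
  refine (hidx.image fun p : Fin d × ℕ => hitT (B p.1) ε p.2 ω).subset ?_
  rintro t ⟨⟨j, m, h1m, rfl⟩, htM⟩
  refine ⟨(j, m), ?_, rfl⟩
  by_contra hgt
  simp only [mem_setOf_eq, not_le] at hgt
  have h1 := hmono j (le_of_lt hgt)
  have h2 := hm0 j
  simp only [mem_Iic] at htM
  simp only [mem_setOf_eq] at h1
  linarith

lemma mT_def_succ (B : Fin d → ℝ → Ω → ℝ) (ε : ℝ) (ω : Ω) (q : ℕ) :
    mT B ε (q + 1) ω = sInf {t | mT B ε q ω < t ∧ t ∈ hitSet B ε ω} := rfl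

lemma mT_def_zero (B : Fin d → ℝ → Ω → ℝ) (ε : ℝ) (ω : Ω) : mT B ε 0 ω = 0 := rfl

lemma mT_struct {ω : Ω} (hd : 0 < d)
    (hsm : ∀ j : Fin d, StrictMono fun m => hitT (B j) ε m ω)
    (hub : ∀ j : Fin d, ∀ M : ℝ, ∃ m, M < hitT (B j) ε m ω) :
    ∀ p : ℕ, 0 ≤ mT B ε p ω ∧
      IsLeast {t | mT B ε p ω < t ∧ t ∈ hitSet B ε ω} (mT B ε (p + 1) ω) := by
  have hfin := hitSet_inter_finite (B := B) (ε := ε) (ω := ω)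
    (fun j => (hsm j).monotone) hub
  have step : ∀ a : ℝ, 0 ≤ a →
      IsLeast {t | a < t ∧ t ∈ hitSet B ε ω} (sInf {t | a < t ∧ t ∈ hitSet B ε ω}) := by
    intro a ha
    obtain ⟨m, hm⟩ := hub ⟨0, hd⟩ a
    have hm1 : 1 ≤ m := by
      rcases Nat.eq_zero_or_pos m with h | h
      · exfalso
        rw [h] at hm
        have h0 : hitT (B ⟨0, hd⟩) ε 0 ω = 0 := rfl
        rw [h0] at hm
        linarith
      · exact h
    have ht0 : hitT (B ⟨0, hd⟩) ε m ω ∈ {t | a < t ∧ t ∈ hitSet B ε ω} :=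
      ⟨hm, ⟨_, m, hm1, rfl⟩⟩
    set t0 := hitT (B ⟨0, hd⟩) ε m ω with ht0def
    have hVfin : ({t | a < t ∧ t ∈ hitSet B ε ω} ∩ Iic t0).Finite :=
      (hfin t0).subset (by rintro x ⟨hx, hx2⟩; exact ⟨hx.2, hx2⟩)
    have hVne : ({t | a < t ∧ t ∈ hitSet B ε ω} ∩ Iic t0).Nonempty :=
      ⟨t0, ht0, mem_Iic.2 (le_refl _)⟩
    have hmin := hVne.csInf_mem hVfin
    have hls : IsLeast {t | a < t ∧ t ∈ hitSet B ε ω}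
        (sInf ({t | a < t ∧ t ∈ hitSet B ε ω} ∩ Iic t0)) := by
      refine ⟨hmin.1, fun x hx => ?_⟩
      rcases le_or_gt x t0 with h | h
      · exact csInf_le hVfin.bddBelow ⟨hx, mem_Iic.2 h⟩
      · exact le_trans (mem_Iic.1 hmin.2) (le_of_lt h)
    rwa [hls.csInf_eq]
  intro p
  induction p with
  | zero =>
      constructor
      · rw [mT_def_zero]
      · rw [mT_def_succ]
        exact step _ (le_of_eq (mT_def_zero B ε ω).symm)
  | succ p ih =>
      have h1 : 0 ≤ mT B ε (p + 1) ω := le_of_lt (lt_of_le_of_lt ih.1 ih.2.1.1)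
      refine ⟨h1, ?_⟩
      rw [mT_def_succ]
      exact step _ h1

lemma mT_strictMono {ω : Ω} (hd : 0 < d)
    (hsm : ∀ j : Fin d, StrictMono fun m => hitT (B j) ε m ω)
    (hub : ∀ j : Fin d, ∀ M : ℝ, ∃ m, M < hitT (B j) ε m ω) :
    StrictMono fun p => mT B ε p ω :=
  strictMono_nat_of_lt_succ fun p => (mT_struct hd hsm hub p).2.1.1

lemma mT_unbounded {ω : Ω} (hd : 0 < d)
    (hsm : ∀ j : Fin d, StrictMono fun m => hitT (B j) ε m ω)
    (hub : ∀ j : Fin d, ∀ M : ℝ, ∃ m, M < hitT (B j) ε m ω) :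
    ∀ M : ℝ, ∃ p, M < mT B ε p ω := by
  intro M
  by_contra hcon
  push_neg at hcon
  have hfin := hitSet_inter_finite (B := B) (ε := ε) (ω := ω)
    (fun j => (hsm j).monotone) hub M
  have hinj : Function.Injective fun p : ℕ => mT B ε (p + 1) ω := by
    intro p q hpq
    have := (mT_strictMono hd hsm hub).injective hpq
    omega
  have hinf : (hitSet B ε ω ∩ Iic M).Infinite :=
    Set.infinite_of_injective_forall_mem hinj
      (fun p => ⟨(mT_struct hd hsm hub p).2.1.2, hcon _⟩)
  exact hinf hfin

lemma mT_surj {ω : Ω} (hd : 0 < d)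
    (hsm : ∀ j : Fin d, StrictMono fun m => hitT (B j) ε m ω)
    (hub : ∀ j : Fin d, ∀ M : ℝ, ∃ m, M < hitT (B j) ε m ω) :
    ∀ u ∈ hitSet B ε ω, ∃ p, mT B ε p ω = u := by
  have hfin := hitSet_inter_finite (B := B) (ε := ε) (ω := ω)
    (fun j => (hsm j).monotone) hub
  have hpos : ∀ u ∈ hitSet B ε ω, 0 < u := by
    rintro u ⟨j, m, hm, rfl⟩
    have h0 : hitT (B j) ε 0 ω = 0 := rfl
    have := hsm j (show 0 < m from hm)
    simpa [h0] using this
  have hWfin : ∀ u : ℝ, (hitSet B ε ω ∩ Iio u).Finite := fun u =>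
    (hfin u).subset (by rintro x ⟨h1, h2⟩; exact ⟨h1, mem_Iic.2 (le_of_lt (mem_Iio.1 h2))⟩)
  have hnext : ∀ u ∈ hitSet B ε ω, ∀ p : ℕ, mT B ε p ω < u →
      (∀ x ∈ hitSet B ε ω, mT B ε p ω < x → x < u → False) → mT B ε (p + 1) ω = u := by
    intro u hu p hpu hgap
    have hls := (mT_struct hd hsm hub p).2
    have hle : mT B ε (p + 1) ω ≤ u := hls.2 ⟨hpu, hu⟩
    rcases lt_or_eq_of_le hle with h | h
    · exact absurd (hgap _ hls.1.2 hls.1.1 h) (fun hh => hh)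
    · exact h
  have key : ∀ c : ℕ, ∀ u, u ∈ hitSet B ε ω → (hitSet B ε ω ∩ Iio u).ncard ≤ c →
      ∃ p, mT B ε p ω = u := by
    intro c
    induction c with
    | zero =>
        intro u hu hcard
        have hW : hitSet B ε ω ∩ Iio u = ∅ :=
          (Set.ncard_eq_zero (hWfin u)).1 (Nat.le_zero.1 hcard)
        refine ⟨1, hnext u hu 0 (by rw [mT_def_zero]; exact hpos u hu) ?_⟩
        intro x hx h0x hxu
        have : x ∈ hitSet B ε ω ∩ Iio u := ⟨hx, mem_Iio.2 hxu⟩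
        rw [hW] at this
        exact this
    | succ c ih =>
        intro u hu hcard
        by_cases hW : hitSet B ε ω ∩ Iio u = ∅
        · refine ⟨1, hnext u hu 0 (by rw [mT_def_zero]; exact hpos u hu) ?_⟩
          intro x hx h0x hxu
          have : x ∈ hitSet B ε ω ∩ Iio u := ⟨hx, mem_Iio.2 hxu⟩
          rw [hW] at this
          exact this
        · have hWne : (hitSet B ε ω ∩ Iio u).Nonempty := Set.nonempty_iff_ne_empty.2 hW
          have hmem := hWne.csSup_mem (hWfin u)
          set u' := sSup (hitSet B ε ω ∩ Iio u) with hu'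
          have hss : hitSet B ε ω ∩ Iio u' ⊂ hitSet B ε ω ∩ Iio u := by
            constructor
            · intro x hx
              exact ⟨hx.1, mem_Iio.2 (lt_trans (mem_Iio.1 hx.2) (mem_Iio.1 hmem.2))⟩
            · intro hsub
              have := hsub hmem
              exact lt_irrefl _ (mem_Iio.1 this.2)
          have hcard' : (hitSet B ε ω ∩ Iio u').ncard ≤ c := by
            have := Set.ncard_lt_ncard hss (hWfin u)
            omega
          obtain ⟨p, hp⟩ := ih u' hmem.1 hcard'
          refine ⟨p + 1, hnext u hu p (by rw [hp]; exact mem_Iio.1 hmem.2) ?_⟩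
          intro x hx hpx hxu
          have hxW : x ∈ hitSet B ε ω ∩ Iio u := ⟨hx, mem_Iio.2 hxu⟩
          have := le_csSup (hWfin u).bddAbove hxW
          rw [← hu'] at this
          rw [hp] at hpx
          linarith
  intro u hu
  exact key _ u hu (le_refl _)


/-! #### The good event and the structure of `Qtime` and `etaTime` -/

/-- The full-measure event on which all pathwise arguments are valid. -/
def goodEvent (B : Fin d → ℝ → Ω → ℝ) (ε : ℝ) : Set Ω :=
  {ω | ∀ j : Fin d, (Continuous fun t => B j t ω) ∧
    ∀ a : ℝ, 0 ≤ a → ∃ t, a < t ∧ ε ≤ |B j t ω - B j a ω|}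

lemma good_hsm {ω : Ω} (hε : 0 < ε) (hω : ω ∈ goodEvent B ε) :
    ∀ j : Fin d, StrictMono fun m => hitT (B j) ε m ω :=
  fun j => hitT_strictMono hε (hω j).1 (hω j).2

lemma good_hub {ω : Ω} (hε : 0 < ε) (hω : ω ∈ goodEvent B ε) :
    ∀ j : Fin d, ∀ M : ℝ, ∃ m, M < hitT (B j) ε m ω :=
  fun j => hitT_unbounded hε (hω j).1 (hω j).2

lemma Q_eta_struct {τ : Ω → ℝ} {ω : Ω} (hd : 0 < d) (hε : 0 < ε)
    (hω : ω ∈ goodEvent B ε) {n r : ℕ}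
    (hn : mT B ε n ω ≤ τ ω) (hr : τ ω ≤ mT B ε r ω) :
    ∃ ℓ : ℕ, n + 1 ≤ ℓ ∧ ℓ ≤ r + 1 ∧
      IsLeast {t : ℝ | (∃ p : ℕ, mT B ε p ω = t) ∧ τ ω < t} (mT B ε ℓ ω) ∧
      Qtime B ε τ ω = mT B ε ℓ ω ∧
      mT B ε (ℓ - 1) ω ≤ τ ω ∧
      etaTime B ε τ n r ω = mT B ε (ℓ - 1) ω := by
  classical
  have hsm := good_hsm hε hω
  have hub := good_hub hε hω
  have hsmT := mT_strictMono hd hsm hub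
  have hubT := mT_unbounded hd hsm hub
  set L := {p : ℕ | τ ω < mT B ε p ω} with hL
  have hLne : L.Nonempty := hubT (τ ω)
  set ℓ := sInf L with hℓ
  have hℓL : ℓ ∈ L := Nat.sInf_mem hLne
  have hmin : ∀ p, p < ℓ → ¬ τ ω < mT B ε p ω := fun p hp =>
    Nat.notMem_of_lt_sInf hp
  have hnℓ : n + 1 ≤ ℓ := by
    by_contra h
    push_neg at h
    have h1 : ℓ ≤ n := by omega
    have h2 : mT B ε ℓ ω ≤ mT B ε n ω := hsmT.monotone h1
    have h3 : τ ω < mT B ε ℓ ω := hℓL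
    linarith
  have hℓr : ℓ ≤ r + 1 :=
    Nat.sInf_le (show τ ω < mT B ε (r + 1) ω from lt_of_le_of_lt hr (hsmT (Nat.lt_succ_self r)))
  have hprev : mT B ε (ℓ - 1) ω ≤ τ ω := by
    have h1 : ℓ - 1 < ℓ := by omega
    have := hmin _ h1
    push_neg at this
    exact this
  have hls : IsLeast {t : ℝ | (∃ p : ℕ, mT B ε p ω = t) ∧ τ ω < t} (mT B ε ℓ ω) := by
    constructor
    · exact ⟨⟨ℓ, rfl⟩, hℓL⟩
    · rintro t ⟨⟨p, rfl⟩, hpt⟩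
      exact hsmT.monotone (Nat.sInf_le hpt)
  have hQ : Qtime B ε τ ω = mT B ε ℓ ω := by
    rw [show Qtime B ε τ ω = sInf {t : ℝ | (∃ p : ℕ, mT B ε p ω = t) ∧ τ ω < t} from rfl,
      hls.csInf_eq]
  have heta : etaTime B ε τ n r ω = mT B ε (ℓ - 1) ω := by
    unfold etaTime
    rw [Finset.sum_eq_single_of_mem ℓ (Finset.mem_Icc.2 ⟨by omega, hℓr⟩)]
    · rw [if_pos hQ]
    · intro b hb hbℓ
      rw [if_neg]
      intro h
      rw [hQ] at h
      exact hbℓ (hsmT.injective h).symm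
  exact ⟨ℓ, hnℓ, hℓr, hls, hQ, hprev, heta⟩

lemma Zk_eq_pointwise {Zk : ℝ → Ω → ℝ} (hZk : IsPureJump B ε Zk) {τ : Ω → ℝ} {ω : Ω}
    (hd : 0 < d) (hε : 0 < ε) (hω : ω ∈ goodEvent B ε) {n r : ℕ}
    (hn : mT B ε n ω ≤ τ ω) (hr : τ ω ≤ mT B ε r ω) (T : ℝ) :
    Zk (min (τ ω) T) ω = Zk (min (etaTime B ε τ n r ω) T) ω := by
  obtain ⟨ℓ, hn1, hr1, hls, hQ, hprev, heta⟩ := Q_eta_struct hd hε hω hn hr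
  have hℓ1 : ℓ - 1 + 1 = ℓ := by omega
  have hτlt : τ ω < mT B ε ℓ ω := hls.1.2
  have hmono : mT B ε (ℓ - 1) ω < mT B ε ℓ ω := by
    have := mT_strictMono hd (good_hsm hε hω) (good_hub hε hω) (show ℓ - 1 < ℓ by omega)
    exact this
  have rule : ∀ t : ℝ, mT B ε (ℓ - 1) ω ≤ t → t < mT B ε ℓ ω →
      Zk t ω = Zk (mT B ε (ℓ - 1) ω) ω := by
    intro t h1 h2
    exact hZk.2 ω t (ℓ - 1) h1 (by rwa [hℓ1])
  rw [heta]
  rcases le_total T (mT B ε (ℓ - 1) ω) with hT | hT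
  · rw [min_eq_right hT, min_eq_right (le_trans hT hprev)]
  · rcases le_total (τ ω) T with h | h
    · rw [min_eq_left h, min_eq_left hT,
        rule (τ ω) hprev hτlt, rule (mT B ε (ℓ - 1) ω) (le_refl _) hmono]
    · rw [min_eq_right h, min_eq_left hT,
        rule T hT (lt_of_le_of_lt h hτlt), rule (mT B ε (ℓ - 1) ω) (le_refl _) hmono]


/-! #### The good event has full measure -/

lemma ae_bigIncrements [IsProbabilityMeasure P] {b : ℝ → Ω → ℝ} (hb : IsBM P b)
    (hε : 0 < ε) :
    ∀ᵐ ω ∂P, ∀ nn : ℕ, ∃ i : ℕ, nn ≤ i ∧ 2 * ε < |b ((i : ℝ) + 1) ω - b (i : ℝ) ω| := by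
  classical
  set u : ℕ → ℝ := fun i => (i : ℝ) with hu
  have humono : Monotone u := fun a b h => Nat.cast_le.2 h
  have hunn : ∀ i, 0 ≤ u i := fun i => Nat.cast_nonneg i
  have hind := hb.indep u humono hunn
  set X : ℕ → Ω → ℝ := fun i ω => b (u (i + 1)) ω - b (u i) ω with hX
  have hXmeas : ∀ i, Measurable (X i) := fun i => (hb.meas _).sub (hb.meas _)
  have hlaw : ∀ i, P.map (X i) = gaussianReal 0 1 := by
    intro i
    have h1 : u i ≤ u (i + 1) := humono (Nat.le_succ i)
    have := hb.gauss (u i) (u (i + 1)) (hunn i) h1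
    rw [hX]
    rw [this]
    congr 1
    have : u (i + 1) - u i = 1 := by
      simp only [hu]
      push_cast
      ring
    rw [this, Real.toNNReal_one]
  set Sset : Set ℝ := {x : ℝ | |x| ≤ 2 * ε} with hSset
  have hSmeas : MeasurableSet Sset := measurableSet_le (measurable_id.abs) measurable_const
  set c : ℝ≥0∞ := gaussianReal 0 1 Sset with hc
  -- c < 1
  have hIoipos : 0 < gaussianReal 0 1 (Ioi (2 * ε)) := by
    rw [pos_iff_ne_zero]
    intro h0
    rw [gaussianReal_apply 0 one_ne_zero] at h0
    have hpdfmeas : Measurable (gaussianPDF 0 1) :=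
      ENNReal.measurable_ofReal.comp (measurable_gaussianPDFReal 0 1)
    rw [lintegral_eq_zero_iff hpdfmeas] at h0
    rw [Filter.EventuallyEq, ae_restrict_iff' measurableSet_Ioi] at h0
    have : ∀ᵐ x ∂(volume : Measure ℝ), x ∉ Ioi (2 * ε) := by
      filter_upwards [h0] with x hx
      intro hmem
      have := hx hmem
      have hpos : 0 < gaussianPDFReal 0 1 x := gaussianPDFReal_pos 0 1 x one_ne_zero
      simp only [gaussianPDF, Pi.zero_apply] at this
      rw [ENNReal.ofReal_eq_zero] at this
      linarith
    rw [ae_iff] at this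
    simp only [not_not] at this
    have hIoi : (volume : Measure ℝ) {x | x ∈ Ioi (2 * ε)} = ⊤ := by
      have : {x : ℝ | x ∈ Ioi (2 * ε)} = Ioi (2 * ε) := rfl
      rw [this, Real.volume_Ioi]
    rw [this] at *
    simp_all
  have hc1 : c < 1 := by
    have hsub : Sset ⊆ (Ioi (2 * ε))ᶜ := by
      intro x hx
      simp only [mem_compl_iff, mem_Ioi, not_lt]
      exact le_trans (le_abs_self x) hx
    have h2 : gaussianReal 0 1 (Ioi (2 * ε))ᶜ = 1 - gaussianReal 0 1 (Ioi (2 * ε)) := by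
      rw [measure_compl measurableSet_Ioi (measure_ne_top _ _), measure_univ]
    calc c ≤ gaussianReal 0 1 (Ioi (2 * ε))ᶜ := measure_mono hsub
      _ = 1 - gaussianReal 0 1 (Ioi (2 * ε)) := h2
      _ < 1 := ENNReal.sub_lt_self ENNReal.one_ne_top one_ne_zero (ne_of_gt hIoipos)
  have hci : ∀ i, P (X i ⁻¹' Sset) = c := by
    intro i
    rw [← Measure.map_apply (hXmeas i) hSmeas, hlaw i]
  have hinter : ∀ nn : ℕ, P (⋂ i : ℕ, ⋂ (_ : nn ≤ i), X i ⁻¹' Sset) = 0 := by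
    intro nn
    have hle : ∀ N : ℕ, P (⋂ i : ℕ, ⋂ (_ : nn ≤ i), X i ⁻¹' Sset) ≤ c ^ (N + 1) := by
      intro N
      have hprod := hind.measure_inter_preimage_eq_mul (Finset.Icc nn (nn + N))
        (sets := fun _ => Sset) (fun i _ => hSmeas)
      have hsub : (⋂ i : ℕ, ⋂ (_ : nn ≤ i), X i ⁻¹' Sset) ⊆
          ⋂ i ∈ Finset.Icc nn (nn + N), X i ⁻¹' Sset := by
        intro ω hω
        simp only [mem_iInter] at hω ⊢
        intro i hi
        simp only [Finset.mem_Icc] at hi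
        exact hω i hi.1
      calc P (⋂ i : ℕ, ⋂ (_ : nn ≤ i), X i ⁻¹' Sset)
          ≤ P (⋂ i ∈ Finset.Icc nn (nn + N), X i ⁻¹' Sset) := measure_mono hsub
        _ = ∏ i ∈ Finset.Icc nn (nn + N), P (X i ⁻¹' Sset) := hprod
        _ = c ^ (N + 1) := by
            rw [Finset.prod_congr rfl fun i _ => hci i, Finset.prod_const, Nat.card_Icc]
            congr 1
            omega
    have htend : Tendsto (fun N : ℕ => c ^ (N + 1)) atTop (𝓝 0) :=
      (ENNReal.tendsto_pow_atTop_nhds_zero_of_lt_one hc1).comp (tendsto_add_atTop_nat 1)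
    exact le_antisymm (ge_of_tendsto' htend hle) (zero_le)
  have hbad : P (⋃ nn : ℕ, ⋂ i : ℕ, ⋂ (_ : nn ≤ i), X i ⁻¹' Sset) = 0 :=
    measure_iUnion_null hinter
  rw [ae_iff]
  refine measure_mono_null ?_ hbad
  intro ω hω
  simp only [mem_setOf_eq, not_forall, not_exists, not_and, not_lt] at hω
  obtain ⟨nn, hnn⟩ := hω
  refine mem_iUnion.2 ⟨nn, ?_⟩
  simp only [mem_iInter]
  intro i hi
  have h1 := hnn i hi
  simp only [hSset, hX, hu, mem_preimage, mem_setOf_eq]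
  have hcast : ((i + 1 : ℕ) : ℝ) = (i : ℝ) + 1 := by push_cast; ring
  rw [hcast]
  exact h1

lemma ae_goodEvent [IsProbabilityMeasure P] (hB : IsBMd P B) (hε : 0 < ε) :
    ∀ᵐ ω ∂P, ω ∈ goodEvent B ε := by
  have hj : ∀ j : Fin d, ∀ᵐ ω ∂P, (Continuous fun t => B j t ω) ∧
      ∀ a : ℝ, 0 ≤ a → ∃ t, a < t ∧ ε ≤ |B j t ω - B j a ω| := by
    intro j
    filter_upwards [(hB.coord j).cont, ae_bigIncrements (hB.coord j) hε] with ω h1 h2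
    exact ⟨h1, osc_of_big_increments hε h2⟩
  filter_upwards [ae_all_iff.2 hj] with ω h
  exact h


/-! #### Measurable representatives of the hitting-time events -/

lemma ratApprox {s u θ : ℝ} (h0 : 0 ≤ u) (hs : u ≤ s) (hθ : 0 < θ) :
    ∃ q : ℚ, 0 ≤ (q : ℝ) ∧ (q : ℝ) ≤ s ∧ |(q : ℝ) - u| < θ := by
  rcases eq_or_lt_of_le h0 with h | h
  · exact ⟨0, by norm_num, by rw [Rat.cast_zero]; linarith, by
      rw [Rat.cast_zero, ← h, sub_zero, abs_zero]; exact hθ⟩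
  · have hl : max (u - θ) 0 < u := max_lt (by linarith) h
    obtain ⟨q, hq1, hq2⟩ := exists_rat_btwn hl
    refine ⟨q, le_of_lt (lt_of_le_of_lt (le_max_right _ _) hq1), by linarith, ?_⟩
    rw [abs_of_nonpos (by linarith)]
    have := lt_of_le_of_lt (le_max_left (u - θ) 0) hq1
    linarith

lemma ratUC {f : ℝ → ℝ} (hc : Continuous f) {s δ c : ℝ}
    (huc : ∀ q1 q2 : ℚ, 0 ≤ (q1 : ℝ) → (q1 : ℝ) ≤ s → 0 ≤ (q2 : ℝ) → (q2 : ℝ) ≤ s →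
      |(q1 : ℝ) - q2| ≤ δ → |f q1 - f q2| ≤ c) :
    ∀ u v : ℝ, 0 ≤ u → u ≤ s → 0 ≤ v → v ≤ s → |u - v| < δ → |f u - f v| ≤ c := by
  intro u v hu0 hus hv0 hvs huv
  by_contra hcon
  push_neg at hcon
  set θ : ℝ := (|f u - f v| - c) / 2 with hθdef
  have hθ : 0 < θ := by simp only [hθdef]; linarith
  obtain ⟨γ1, hγ1, hγ1P⟩ : ∃ γ > 0, ∀ x : ℝ, |x - u| < γ → |f x - f u| < θ / 2 := by
    obtain ⟨γ, h1, h2⟩ := Metric.continuousAt_iff.1 (hc.continuousAt (x := u)) (θ / 2)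
      (by linarith)
    exact ⟨γ, h1, fun x hx => by
      have := h2 (x := x) (by rwa [Real.dist_eq]); rwa [Real.dist_eq] at this⟩
  obtain ⟨γ2, hγ2, hγ2P⟩ : ∃ γ > 0, ∀ x : ℝ, |x - v| < γ → |f x - f v| < θ / 2 := by
    obtain ⟨γ, h1, h2⟩ := Metric.continuousAt_iff.1 (hc.continuousAt (x := v)) (θ / 2)
      (by linarith)
    exact ⟨γ, h1, fun x hx => by
      have := h2 (x := x) (by rwa [Real.dist_eq]); rwa [Real.dist_eq] at this⟩
  set ρ : ℝ := (δ - |u - v|) / 2 with hρdef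
  have hρ : 0 < ρ := by simp only [hρdef]; linarith
  obtain ⟨q1, hq10, hq1s, hq1u⟩ := ratApprox hu0 hus (lt_min (lt_min hγ1 hγ2) hρ)
  obtain ⟨q2, hq20, hq2s, hq2v⟩ := ratApprox hv0 hvs (lt_min (lt_min hγ1 hγ2) hρ)
  have hd1 : |(q1 : ℝ) - u| < γ1 := lt_of_lt_of_le hq1u (le_trans (min_le_left _ _) (min_le_left _ _))
  have hd2 : |(q2 : ℝ) - v| < γ2 := lt_of_lt_of_le hq2v (le_trans (min_le_left _ _) (min_le_right _ _))
  have hρ1 : |(q1 : ℝ) - u| < ρ := lt_of_lt_of_le hq1u (min_le_right _ _)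
  have hρ2 : |(q2 : ℝ) - v| < ρ := lt_of_lt_of_le hq2v (min_le_right _ _)
  have hq12 : |(q1 : ℝ) - q2| ≤ δ := by
    have h1 : |(q1 : ℝ) - q2| ≤ |(q1 : ℝ) - u| + |u - v| + |v - (q2 : ℝ)| := by
      calc |(q1 : ℝ) - q2| ≤ |(q1 : ℝ) - v| + |v - (q2 : ℝ)| := abs_sub_le _ _ _
        _ ≤ |(q1 : ℝ) - u| + |u - v| + |v - (q2 : ℝ)| := by
            have := abs_sub_le (q1 : ℝ) u v
            linarith
    rw [abs_sub_comm v (q2 : ℝ)] at h1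
    simp only [hρdef] at hρ1 hρ2
    linarith
  have hmain := huc q1 q2 hq10 hq1s hq20 hq2s hq12
  have h1 := hγ1P _ hd1
  have h2 := hγ2P _ hd2
  have : |f u - f v| ≤ θ / 2 + c + θ / 2 := by
    calc |f u - f v| ≤ |f u - f (q1 : ℝ)| + |f (q1 : ℝ) - f v| := abs_sub_le _ _ _
      _ ≤ |f u - f (q1 : ℝ)| + (|f (q1 : ℝ) - f (q2 : ℝ)| + |f (q2 : ℝ) - f v|) := by
          have := abs_sub_le (f (q1 : ℝ)) (f (q2 : ℝ)) (f v)
          linarith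
      _ ≤ θ / 2 + c + θ / 2 := by
          have e1 : |f u - f (q1 : ℝ)| = |f (q1 : ℝ) - f u| := abs_sub_comm _ _
          linarith [h1, h2, hmain, e1]
  simp only [hθdef] at this
  linarith

lemma measSet_abs_le {α : Type*} {m : MeasurableSpace α} {f g : α → ℝ}
    (hf : Measurable[m] f) (hg : Measurable[m] g) (c : ℝ) :
    MeasurableSet[m] {ω | |f ω - g ω| ≤ c} := by
  exact measurableSet_le ((hf.sub hg).abs) measurable_const

lemma measSet_le_abs {α : Type*} {m : MeasurableSpace α} {f g : α → ℝ}
    (hf : Measurable[m] f) (hg : Measurable[m] g) (c : ℝ) :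
    MeasurableSet[m] {ω | c ≤ |f ω - g ω|} := by
  exact measurableSet_le measurable_const ((hf.sub hg).abs)

lemma hitRep (P : Measure Ω) (B : Fin d → ℝ → Ω → ℝ) (hε : 0 < ε) (j : Fin d) :
    ∀ m : ℕ, ∀ s : ℝ, ∃ S : Set Ω, MeasurableSet[augFilt P B s] S ∧
      ∀ ω, (Continuous fun t => B j t ω) →
        (∀ a : ℝ, 0 ≤ a → ∃ t, a < t ∧ ε ≤ |B j t ω - B j a ω|) →
        (ω ∈ S ↔ hitT (B j) ε m ω ≤ s) := by
  intro m
  induction m with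
  | zero =>
      intro s
      by_cases hs : (0 : ℝ) ≤ s
      · refine ⟨univ, @MeasurableSet.univ _ (augFilt P B s), fun ω _ _ => ?_⟩
        simp only [mem_univ, true_iff]
        rw [show hitT (B j) ε 0 ω = 0 from rfl]
        exact hs
      · refine ⟨∅, @MeasurableSet.empty _ (augFilt P B s), fun ω _ _ => ?_⟩
        simp only [mem_empty_iff_false, false_iff]
        rw [show hitT (B j) ε 0 ω = 0 from rfl]
        exact hs
  | succ m IH =>
      intro s
      choose R hRmeas hRiff using IH
      set UC : ℚ → ℕ → Set Ω := fun δ k =>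
        ⋂ (q1 : ℚ) (_ : 0 ≤ (q1 : ℝ) ∧ (q1 : ℝ) ≤ s) (q2 : ℚ)
          (_ : (0 ≤ (q2 : ℝ) ∧ (q2 : ℝ) ≤ s) ∧ |(q1 : ℝ) - (q2 : ℝ)| ≤ (δ : ℝ)),
          {ω | |B j (q1 : ℝ) ω - B j (q2 : ℝ) ω| ≤ 1 / ((k : ℝ) + 1)} with hUCdef
      set OSC : ℚ → ℕ → Set Ω := fun q'' k =>
        ⋃ (q' : ℚ) (_ : (q'' : ℝ) < (q' : ℝ) ∧ (q' : ℝ) ≤ s),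
          {ω | ε - 2 / ((k : ℝ) + 1) ≤ |B j (q' : ℝ) ω - B j (q'' : ℝ) ω|} with hOSCdef
      refine ⟨⋂ (k : ℕ), ⋃ (δ : ℚ) (_ : 0 < (δ : ℝ)) (q'' : ℚ)
        (_ : 0 ≤ (q'' : ℝ) ∧ (q'' : ℝ) ≤ s),
        (R (q'' : ℝ) ∩ (R ((q'' : ℝ) - (δ : ℝ)))ᶜ ∩ UC δ k ∩ OSC q'' k), ?_, ?_⟩
      · -- measurability
        refine MeasurableSet.iInter fun k => MeasurableSet.iUnion fun δ =>
          MeasurableSet.iUnion fun hδ => MeasurableSet.iUnion fun q'' =>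
          MeasurableSet.iUnion fun hq'' => ?_
        have hmeasB : ∀ x : ℝ, x ≤ s → Measurable[augFilt P B s] fun ω => B j x ω :=
          fun x hx => measurable_B_augFilt P B hx j
        refine MeasurableSet.inter (MeasurableSet.inter (MeasurableSet.inter ?_ ?_) ?_) ?_
        · exact augFilt_mono P B hq''.2 _ (hRmeas (q'' : ℝ))
        · exact (augFilt_mono P B (by linarith [hq''.2]) _ (hRmeas ((q'' : ℝ) - (δ : ℝ)))).compl
        · refine MeasurableSet.iInter fun q1 => MeasurableSet.iInter fun hq1 =>
            MeasurableSet.iInter fun q2 => MeasurableSet.iInter fun hq2 => ?_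
          exact measSet_abs_le (hmeasB _ hq1.2) (hmeasB _ hq2.1.2) _
        · refine MeasurableSet.iUnion fun q' => MeasurableSet.iUnion fun hq' => ?_
          exact measSet_le_abs (hmeasB _ hq'.2) (hmeasB _ hq''.2) _
      · -- the pointwise equivalence
        intro ω hc hosc
        have hstruct := hitT_struct (b := B j) (ω := ω) hε hc hosc
        set h : ℝ := hitT (B j) ε m ω with hh
        have h0m : 0 ≤ h := (hstruct m).1
        constructor
        · -- forward
          intro hω
          simp only [mem_iInter, mem_iUnion, mem_inter_iff, mem_compl_iff] at hω
          have hkey : ∀ k : ℕ, ∃ u : ℝ, h ≤ u ∧ u ≤ s ∧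
              ε - 3 / ((k : ℝ) + 1) ≤ |B j u ω - B j h ω| := by
            intro k
            obtain ⟨δ, hδ, q'', hq'', ⟨⟨hR1, hR2⟩, hUCm⟩, hOSCm⟩ := hω k
            have hhq : h ≤ (q'' : ℝ) := (hRiff (q'' : ℝ) ω hc hosc).1 hR1
            have hq2 : (q'' : ℝ) - (δ : ℝ) < h := by
              by_contra hcon
              push_neg at hcon
              exact hR2 ((hRiff _ ω hc hosc).2 hcon)
            simp only [hUCdef, mem_iInter, mem_setOf_eq] at hUCm
            have hucreal := ratUC hc (c := 1 / ((k : ℝ) + 1)) (δ := (δ : ℝ))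
              (fun q1 q2 a1 a2 a3 a4 a5 => hUCm q1 ⟨a1, a2⟩ q2 ⟨⟨a3, a4⟩, a5⟩)
            have hfm : |B j (q'' : ℝ) ω - B j h ω| ≤ 1 / ((k : ℝ) + 1) := by
              refine hucreal _ _ hq''.1 hq''.2 h0m (le_trans hhq hq''.2) ?_
              rw [abs_of_nonneg (by linarith)]
              linarith
            simp only [hOSCdef, mem_iUnion, mem_setOf_eq] at hOSCm
            obtain ⟨q', hq', habs⟩ := hOSCm
            refine ⟨(q' : ℝ), le_trans hhq (le_of_lt hq'.1), hq'.2, ?_⟩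
            have htri : |B j (q' : ℝ) ω - B j (q'' : ℝ) ω| ≤
                |B j (q' : ℝ) ω - B j h ω| + |B j h ω - B j (q'' : ℝ) ω| := abs_sub_le _ _ _
            rw [abs_sub_comm (B j h ω)] at htri
            have hdiv : 3 / ((k : ℝ) + 1) = 2 / ((k : ℝ) + 1) + 1 / ((k : ℝ) + 1) := by ring
            linarith
          have hms : h ≤ s := by
            obtain ⟨u, h1, h2, _⟩ := hkey 0
            linarith
          set g : ℝ → ℝ := fun u => |B j u ω - B j h ω| with hg
          have hgc : Continuous g := ((hc.sub continuous_const)).abs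
          have hgh : g h = 0 := by simp [hg]
          obtain ⟨ustar, hustar, hmax⟩ := isCompact_Icc.exists_isMaxOn
            (⟨h, le_refl _, hms⟩ : (Icc h s).Nonempty) hgc.continuousOn
          have hεle : ε ≤ g ustar := by
            by_contra hcon
            push_neg at hcon
            obtain ⟨k, hk⟩ := exists_nat_gt (3 / (ε - g ustar))
            have hpos : 0 < ε - g ustar := by linarith
            have h3k : 3 / ((k : ℝ) + 1) < ε - g ustar := by
              rw [div_lt_iff₀ (by positivity)]
              rw [div_lt_iff₀ hpos] at hk
              nlinarith [Nat.cast_nonneg (α := ℝ) k]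
            obtain ⟨u, h1, h2, h3⟩ := hkey k
            have hle : g u ≤ g ustar := hmax (⟨h1, h2⟩ : u ∈ Icc h s)
            have hgu : g u = |B j u ω - B j h ω| := rfl
            rw [hgu] at hle
            linarith
          obtain ⟨w, hw, hgw⟩ := intermediate_value_Icc hustar.1 hgc.continuousOn
            (⟨by rw [hgh]; exact le_of_lt hε, hεle⟩ : ε ∈ Icc (g h) (g ustar))
          have hwne : w ≠ h := by
            intro hcon
            rw [hcon, hgh] at hgw
            exact (ne_of_gt hε) hgw.symm
          have hwin : w ∈ {t : ℝ | h < t ∧ |B j t ω - B j h ω| = ε} :=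
            ⟨lt_of_le_of_ne hw.1 (Ne.symm hwne), hgw⟩
          exact le_trans ((hstruct m).2.2 hwin) (le_trans hw.2 hustar.2)
        · -- backward
          intro hle
          set h' : ℝ := hitT (B j) ε (m + 1) ω with hh'
          have hhlt : h < h' := (hstruct m).2.1.1
          have habs : |B j h' ω - B j h ω| = ε := (hstruct m).2.1.2
          have hhs : h ≤ s := le_of_lt (lt_of_lt_of_le hhlt hle)
          simp only [mem_iInter, mem_iUnion, mem_inter_iff, mem_compl_iff]
          intro k
          have hk1 : (0 : ℝ) < 1 / ((k : ℝ) + 1) := by positivity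
          obtain ⟨δ0, hδ0pos, hδ0⟩ : ∃ δ0 > 0, ∀ u ∈ Icc (0 : ℝ) s, ∀ v ∈ Icc (0 : ℝ) s,
              |u - v| < δ0 → |B j u ω - B j v ω| < 1 / ((k : ℝ) + 1) := by
            have huc := isCompact_Icc.uniformContinuousOn_of_continuous
              (s := Icc (0 : ℝ) s) hc.continuousOn
            obtain ⟨δ0, h1, h2⟩ := Metric.uniformContinuousOn_iff.1 huc _ hk1
            exact ⟨δ0, h1, fun u hu v hv huv => by
              have := h2 u hu v hv (by rwa [Real.dist_eq])
              rwa [Real.dist_eq] at this⟩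
          obtain ⟨δ, hδ1, hδ2⟩ := exists_rat_btwn hδ0pos
          obtain ⟨q'', hq''1, hq''2⟩ := exists_rat_btwn
            (lt_min (show h < h + (δ : ℝ) by linarith) hhlt)
          have hq''δ : (q'' : ℝ) < h + (δ : ℝ) := lt_of_lt_of_le hq''2 (min_le_left _ _)
          have hq''h' : (q'' : ℝ) < h' := lt_of_lt_of_le hq''2 (min_le_right _ _)
          have hq''0 : 0 ≤ (q'' : ℝ) := le_trans h0m (le_of_lt hq''1)
          have hq''s : (q'' : ℝ) ≤ s := le_trans (le_of_lt hq''h') hle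
          refine ⟨δ, hδ1, q'', ⟨hq''0, hq''s⟩, ⟨⟨?_, ?_⟩, ?_⟩, ?_⟩
          · exact (hRiff _ ω hc hosc).2 (le_of_lt hq''1)
          · intro hmem
            have := (hRiff _ ω hc hosc).1 hmem
            linarith
          · simp only [hUCdef, mem_iInter, mem_setOf_eq]
            intro q1 hq1 q2 hq2
            exact le_of_lt (hδ0 _ ⟨hq1.1, hq1.2⟩ _ ⟨hq2.1.1, hq2.1.2⟩
              (lt_of_le_of_lt hq2.2 hδ2))
          · -- OSC
            obtain ⟨γ, hγpos, hγ⟩ : ∃ γ > 0, ∀ x : ℝ, |x - h'| < γ →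
                |B j x ω - B j h' ω| < 1 / ((k : ℝ) + 1) := by
              obtain ⟨γ, h1, h2⟩ := Metric.continuousAt_iff.1 (hc.continuousAt (x := h'))
                _ hk1
              exact ⟨γ, h1, fun x hx => by
                have := h2 (x := x) (by rwa [Real.dist_eq]); rwa [Real.dist_eq] at this⟩
            obtain ⟨q', hq'1, hq'2⟩ := exists_rat_btwn
              (show max (q'' : ℝ) (h' - γ) < h' from max_lt hq''h' (by linarith))
            have hq'q'' : (q'' : ℝ) < (q' : ℝ) :=
              lt_of_le_of_lt (le_max_left _ _) hq'1
            have hq'γ : |(q' : ℝ) - h'| < γ := by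
              rw [abs_of_nonpos (by linarith)]
              have := lt_of_le_of_lt (le_max_right (q'' : ℝ) (h' - γ)) hq'1
              linarith
            have hq's : (q' : ℝ) ≤ s := le_trans (le_of_lt hq'2) hle
            have hBq' := hγ _ hq'γ
            have hBq'' : |B j (q'' : ℝ) ω - B j h ω| < 1 / ((k : ℝ) + 1) := by
              refine hδ0 _ ⟨hq''0, hq''s⟩ _ ⟨h0m, hhs⟩ ?_
              rw [abs_of_nonneg (by linarith)]
              linarith
            simp only [hOSCdef, mem_iUnion, mem_setOf_eq]
            refine ⟨q', ⟨hq'q'', hq's⟩, ?_⟩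
            have htri1 : |B j h' ω - B j (q'' : ℝ) ω| ≥ ε - 1 / ((k : ℝ) + 1) := by
              have := abs_sub_le (B j h' ω) (B j (q'' : ℝ) ω) (B j h ω)
              linarith [habs, hBq'']
            have htri2 := abs_sub_le (B j h' ω) (B j (q' : ℝ) ω) (B j (q'' : ℝ) ω)
            rw [abs_sub_comm (B j h' ω) (B j (q' : ℝ) ω)] at htri2
            have hdiv : 2 / ((k : ℝ) + 1) = 1 / ((k : ℝ) + 1) + 1 / ((k : ℝ) + 1) := by ring
            linarith

end AuxDev





/-- For a Brownian stopping time `τ` with `T^k_n ≤ τ ≤ T^k_r` a.s., the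
time `Q(τ)` is a Brownian stopping time, `η(τ)` a.s. avoids `T^k_{n−1}` and takes values
in `{T^k_n, …, T^k_r}`, and `Z^k(τ ∧ T) = Z^k(η(τ) ∧ T)` almost surely. -/
theorem discretization_of_stopping_times
    {d : ℕ} (hd : 0 < d) (P : Measure Ω) [IsProbabilityMeasure P]
    (B : Fin d → ℝ → Ω → ℝ) (hB : IsBMd P B) (ε : ℝ) (hε : 0 < ε)
    (T : ℝ) (hT : 0 < T) (Zk : ℝ → Ω → ℝ) (hZk : IsPureJump B ε Zk)
    (n r : ℕ) (hnr : n ≤ r) (τ : Ω → ℝ) (hτ : IsStopTime (augFilt P B) τ)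
    (hτrange : ∀ᵐ ω ∂P, mT B ε n ω ≤ τ ω ∧ τ ω ≤ mT B ε r ω) :
    IsStopTime (augFilt P B) (Qtime B ε τ) ∧
    (1 ≤ n → P {ω | etaTime B ε τ n r ω = mT B ε (n - 1) ω} = 0) ∧
    (∀ᵐ ω ∂P, ∃ ℓ : ℕ, n ≤ ℓ ∧ ℓ ≤ r ∧ etaTime B ε τ n r ω = mT B ε ℓ ω) ∧
    (∀ᵐ ω ∂P, Zk (min (τ ω) T) ω = Zk (min (etaTime B ε τ n r ω) T) ω) := by
  classical
  have hgood := ae_goodEvent hB hε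
  have hae : ∀ᵐ ω ∂P, ω ∈ goodEvent B ε ∧ (mT B ε n ω ≤ τ ω ∧ τ ω ≤ mT B ε r ω) :=
    hgood.and hτrange
  have hbad : P {ω | ¬ (ω ∈ goodEvent B ε ∧ (mT B ε n ω ≤ τ ω ∧ τ ω ≤ mT B ε r ω))} = 0 :=
    ae_iff.1 hae
  refine ⟨?_, ?_, ?_, ?_⟩
  · -- `Qtime` is a stopping time
    intro t
    choose Rep hRepMeas hRepIff using fun (j : Fin d) (m : ℕ) (x : ℝ) => hitRep P B hε j m x
    set Sfull : Set Ω := ⋃ (j : Fin d) (m : ℕ) (q : ℚ) (_ : (q : ℝ) ≤ t),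
      ((⋃ (q' : ℚ) (_ : (q' : ℝ) < (q : ℝ)), {ω | τ ω ≤ (q' : ℝ)}) ∩
        (⋃ (q'' : ℚ) (_ : (q'' : ℝ) < (q : ℝ)), Rep j (m + 1) (q'' : ℝ))ᶜ ∩
        Rep j (m + 1) t) with hSfull
    have hSmeas : MeasurableSet[augFilt P B t] Sfull := by
      refine MeasurableSet.iUnion fun j => MeasurableSet.iUnion fun m =>
        MeasurableSet.iUnion fun q => MeasurableSet.iUnion fun hq => ?_
      refine MeasurableSet.inter (MeasurableSet.inter ?_ ?_) ?_
      · refine MeasurableSet.iUnion fun q' => MeasurableSet.iUnion fun hq' => ?_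
        exact augFilt_mono P B (le_trans (le_of_lt hq') hq) _ (hτ (q' : ℝ))
      · refine MeasurableSet.compl ?_
        refine MeasurableSet.iUnion fun q'' => MeasurableSet.iUnion fun hq'' => ?_
        exact augFilt_mono P B (le_trans (le_of_lt hq'') hq) _ (hRepMeas j (m + 1) (q'' : ℝ))
      · exact hRepMeas j (m + 1) t
    have hiff : ∀ ω, ω ∈ goodEvent B ε →
        (mT B ε n ω ≤ τ ω ∧ τ ω ≤ mT B ε r ω) →
        (ω ∈ Sfull ↔ Qtime B ε τ ω ≤ t) := by
      intro ω hω hrange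
      obtain ⟨ℓ, hℓ1, hℓ2, hls, hQ, hprev, heta⟩ :=
        Q_eta_struct hd hε hω hrange.1 hrange.2
      have hsm := good_hsm hε hω
      have hub := good_hub hε hω
      constructor
      · -- forward : ω ∈ Sfull → Qtime ≤ t
        intro hmem
        simp only [hSfull, mem_iUnion, mem_inter_iff, mem_compl_iff, mem_setOf_eq] at hmem
        obtain ⟨j, m, q, hq, ⟨⟨h1, h2⟩, h3⟩⟩ := hmem
        obtain ⟨q', hq', hτq'⟩ := h1
        have hτq : τ ω < (q : ℝ) := lt_of_le_of_lt hτq' hq'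
        have hhit_le : hitT (B j) ε (m + 1) ω ≤ t :=
          (hRepIff j (m + 1) t ω (hω j).1 (hω j).2).1 h3
        have hq_le : (q : ℝ) ≤ hitT (B j) ε (m + 1) ω := by
          by_contra hcon
          push_neg at hcon
          have hnn : 0 ≤ hitT (B j) ε (m + 1) ω :=
            (hitT_struct hε (hω j).1 (hω j).2 (m + 1)).1
          obtain ⟨q'', hq''1, hq''2⟩ := exists_rat_btwn hcon
          exact h2 ⟨q'', hq''2, (hRepIff j (m + 1) (q'' : ℝ) ω (hω j).1
            (hω j).2).2 (le_of_lt hq''1)⟩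
        have hmemhit : hitT (B j) ε (m + 1) ω ∈ hitSet B ε ω :=
          ⟨j, m + 1, Nat.le_add_left 1 m, rfl⟩
        obtain ⟨p, hp⟩ := mT_surj hd hsm hub _ hmemhit
        have : mT B ε ℓ ω ≤ hitT (B j) ε (m + 1) ω :=
          hls.2 ⟨⟨p, hp⟩, lt_of_lt_of_le hτq hq_le⟩
        rw [hQ]
        exact le_trans this hhit_le
      · -- backward : Qtime ≤ t → ω ∈ Sfull
        intro hQle
        rw [hQ] at hQle
        have hℓeq : ℓ - 1 + 1 = ℓ := by omega
        have hmemhit : mT B ε ℓ ω ∈ hitSet B ε ω := by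
          have := (mT_struct hd hsm hub (ℓ - 1)).2.1.2
          rwa [hℓeq] at this
        obtain ⟨j, m', hm', hjm⟩ := hmemhit
        have hτlt : τ ω < mT B ε ℓ ω := hls.1.2
        obtain ⟨q, hq1, hq2⟩ := exists_rat_btwn hτlt
        obtain ⟨q', hq'1, hq'2⟩ := exists_rat_btwn hq1
        rw [hSfull]
        simp only [Set.mem_iUnion, Set.mem_inter_iff, Set.mem_compl_iff, Set.mem_setOf_eq]
        obtain ⟨m, rfl⟩ : ∃ m, m' = m + 1 := ⟨m' - 1, by omega⟩
        refine ⟨j, m, q, le_trans (le_of_lt hq2) hQle, ⟨⟨q', hq'2, le_of_lt hq'1⟩, ?_⟩, ?_⟩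
        · intro hcon
          obtain ⟨q'', hq''lt, hq''mem⟩ := hcon
          have := (hRepIff j (m + 1) (q'' : ℝ) ω (hω j).1 (hω j).2).1 hq''mem
          rw [hjm] at this
          linarith
        · refine (hRepIff j (m + 1) t ω (hω j).1 (hω j).2).2 ?_
          rw [hjm]
          exact hQle
    refine measurableSet_augFilt_of_diff t hSmeas (measure_mono_null ?_ hbad)
      (measure_mono_null ?_ hbad)
    · intro ω hω
      simp only [mem_diff, mem_setOf_eq] at hω ⊢
      intro hcon
      exact hω.2 ((hiff ω hcon.1 hcon.2).2 hω.1)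
    · intro ω hω
      simp only [mem_diff, mem_setOf_eq] at hω ⊢
      intro hcon
      exact hω.2 ((hiff ω hcon.1 hcon.2).1 hω.1)
  · -- `etaTime` avoids `mT (n-1)`
    intro hn1
    refine measure_mono_null ?_ hbad
    intro ω hω
    simp only [mem_setOf_eq] at hω ⊢
    intro hcon
    obtain ⟨ℓ, hℓ1, hℓ2, hls, hQ, hprev, heta⟩ :=
      Q_eta_struct hd hε hcon.1 hcon.2.1 hcon.2.2
    rw [heta] at hω
    have := (mT_strictMono hd (good_hsm hε hcon.1) (good_hub hε hcon.1)).injective hω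
    omega
  · -- values of `etaTime`
    filter_upwards [hae] with ω hω
    obtain ⟨ℓ, hℓ1, hℓ2, hls, hQ, hprev, heta⟩ :=
      Q_eta_struct hd hε hω.1 hω.2.1 hω.2.2
    exact ⟨ℓ - 1, by omega, by omega, heta⟩
  · -- the pure-jump identity
    filter_upwards [hae] with ω hω
    exact Zk_eq_pointwise hZk hd hε hω.1 hω.2.1 hω.2.2 T
end
end

section
/- Let 1/2 < H < 1 and T > 0. There exists a constant C depending only on H and T such that |ρ_H(t,s)| ≤ C ( ρ_{H,1}(t,s) + ρ_{H,2}(t,s) ) for all 0 < s < t ≤ T, where ρ_{H,1}(t,s) := t^{H−1/2} s^{1/2−H} (t−s)^{H−3/2} and ρ_{H,2}(t,s) := s^{−H−1/2} ∫_s^t u^{H−3/2} (u−s)^{H−1/2} du. -/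
open MeasureTheory Set
open scoped Topology

noncomputable section

lemma aux_meas (c d p q : ℝ) : AEStronglyMeasurable (fun x : ℝ => (c + d * x) ^ p * x ^ q)
    (volume.restrict (Set.uIoc (0:ℝ) 1)) :=
  Measurable.aestronglyMeasurable (by fun_prop)

lemma rpow_int_integrable {q : ℝ} (hq : -1 < q) (M : ℝ) :
    IntervalIntegrable (fun x : ℝ => M * x ^ q) volume 0 1 :=
  (intervalIntegral.intervalIntegrable_rpow' hq).const_mul M

lemma integrable_F {p q r t : ℝ} (hp : 0 ≤ p) (hq : -1 < q) (hr : 0 < r) (ht : 0 < t) :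
    IntervalIntegrable (fun x : ℝ => (r + (t - r) * x) ^ p * x ^ q) volume 0 1 := by
  apply (rpow_int_integrable hq ((r + |t - r|) ^ p)).mono_fun' (aux_meas _ _ _ _)
  filter_upwards [ae_restrict_mem measurableSet_uIoc] with x hx
  rw [Set.uIoc_of_le (zero_le_one' ℝ)] at hx
  have hx0 : 0 < x := hx.1
  have hx1 : x ≤ 1 := hx.2
  have hbase : 0 ≤ r + (t - r) * x := by
    rcases le_total 0 (t - r) with h | h
    · nlinarith [mul_nonneg h hx0.le]
    · nlinarith [mul_le_mul_of_nonpos_left hx1 h]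
  have hle : r + (t - r) * x ≤ r + |t - r| := by
    nlinarith [mul_le_mul_of_nonneg_right (le_abs_self (t - r)) hx0.le, abs_nonneg (t - r)]
  show ‖_‖ ≤ _
  rw [Real.norm_eq_abs, abs_mul, abs_of_nonneg (Real.rpow_nonneg hbase p),
    abs_of_nonneg (Real.rpow_nonneg hx0.le q)]
  exact mul_le_mul_of_nonneg_right (Real.rpow_le_rpow hbase hle hp) (Real.rpow_nonneg hx0.le q)

set_option maxHeartbeats 1000000 in
lemma hasDeriv_I1 {H t s : ℝ} (hH1 : 1/2 < H) (hH2 : H < 1) (hs : 0 < s) (hst : s < t) :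
    ∃ D : ℝ, |D| ≤ 2 * s ^ (H - 3/2) ∧
      HasDerivAt (fun r => ∫ x in (0:ℝ)..1, (r + (t - r) * x) ^ (H - 1/2) * x ^ (H - 3/2)) D s := by
  have hp : (0:ℝ) < H - 1/2 := by linarith
  have hq : (-1:ℝ) < H - 3/2 := by linarith
  have ht : 0 < t := hs.trans hst
  set F' : ℝ → ℝ → ℝ :=
    fun r x => (1 - x) * (H - 1/2) * (r + (t - r) * x) ^ (H - 1/2 - 1) * x ^ (H - 3/2) with hF'
  have hball : ∀ r ∈ Metric.ball s (s/2), ∀ x ∈ Set.Ioc (0:ℝ) 1, s/2 ≤ r + (t - r) * x := by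
    intro r hr x hx
    rw [Metric.mem_ball, Real.dist_eq, abs_lt] at hr
    nlinarith [hr.1, hr.2, hx.1.le, hx.2]
  -- the uniform bound on F'
  have hFbd : ∀ r, (∀ x' ∈ Set.Ioc (0:ℝ) 1, s/2 ≤ r + (t - r) * x') → ∀ x ∈ Set.Ioc (0:ℝ) 1,
      |F' r x| ≤ ((H - 1/2) * (s/2) ^ (H - 1/2 - 1)) * x ^ (H - 3/2) := by
    intro r hin' x hx
    have hin := hin' x hx
    have hin0 : (0:ℝ) < s/2 := by positivity
    have hx0 : 0 < x := hx.1
    simp only [hF']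
    rw [abs_mul, abs_mul, abs_mul,
      abs_of_nonneg (by linarith [hx.2] : (0:ℝ) ≤ 1 - x),
      abs_of_nonneg hp.le,
      abs_of_nonneg (Real.rpow_nonneg (by linarith) _),
      abs_of_nonneg (Real.rpow_nonneg hx0.le _)]
    have hAnn : 0 ≤ (r + (t - r) * x) ^ (H - 1/2 - 1) := Real.rpow_nonneg (by linarith) _
    have hb : (r + (t - r) * x) ^ (H - 1/2 - 1) ≤ (s/2) ^ (H - 1/2 - 1) :=
      Real.rpow_le_rpow_of_nonpos hin0 hin (by linarith)
    have h1 : (1 - x) * (H - 1/2) * (r + (t - r) * x) ^ (H - 1/2 - 1) ≤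
        (H - 1/2) * (r + (t - r) * x) ^ (H - 1/2 - 1) := by
      apply mul_le_mul_of_nonneg_right _ hAnn
      nlinarith [hx.1.le]
    have h2 : (H - 1/2) * (r + (t - r) * x) ^ (H - 1/2 - 1) ≤
        (H - 1/2) * (s/2) ^ (H - 1/2 - 1) := mul_le_mul_of_nonneg_left hb hp.le
    exact mul_le_mul_of_nonneg_right (h1.trans h2) (Real.rpow_nonneg hx0.le _)
  have key := intervalIntegral.hasDerivAt_integral_of_dominated_loc_of_deriv_le
    (𝕜 := ℝ) (μ := volume) (a := (0:ℝ)) (b := 1)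
    (F := fun r x => (r + (t - r) * x) ^ (H - 1/2) * x ^ (H - 3/2)) (F' := F') (x₀ := s)
    (bound := fun x => ((H - 1/2) * (s/2) ^ (H - 1/2 - 1)) * x ^ (H - 3/2))
    (Metric.ball_mem_nhds s (by positivity : (0:ℝ) < s/2))
    (Filter.Eventually.of_forall fun r => aux_meas r (t - r) _ _)
    (integrable_F hp.le hq hs ht)
    (Measurable.aestronglyMeasurable (by fun_prop))
    ?_ (rpow_int_integrable hq _) ?_
  · obtain ⟨hint, hder⟩ := key
    refine ⟨_, ?_, hder⟩
    have h1 : |∫ x in (0:ℝ)..1, F' s x| ≤ ∫ x in (0:ℝ)..1, |F' s x| :=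
      intervalIntegral.abs_integral_le_integral_abs zero_le_one
    have h2 : (∫ x in (0:ℝ)..1, |F' s x|) ≤
        ∫ x in (0:ℝ)..1, ((H - 1/2) * (s/2) ^ (H - 1/2 - 1)) * x ^ (H - 3/2) := by
      apply intervalIntegral.integral_mono_on zero_le_one hint.abs (rpow_int_integrable hq _)
      intro x hx
      rcases eq_or_lt_of_le hx.1 with hx0 | hx0
      · simp only [hF', ← hx0]
        rw [Real.zero_rpow (show H - 3/2 < (0:ℝ) by linarith).ne]
        simp
      · exact hFbd s (hball s (Metric.mem_ball_self (by positivity))) x ⟨hx0, hx.2⟩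
    have hIq : (∫ x in (0:ℝ)..1, x ^ (H - 3/2)) = 1/(H - 1/2) := by
      rw [integral_rpow (Or.inl hq), show H - 3/2 + 1 = H - 1/2 from by ring, Real.one_rpow,
        Real.zero_rpow hp.ne']
      norm_num
    have h3 : (∫ x in (0:ℝ)..1, ((H - 1/2) * (s/2) ^ (H - 1/2 - 1)) * x ^ (H - 3/2)) =
        (s/2) ^ (H - 3/2) := by
      rw [intervalIntegral.integral_const_mul, hIq,
        show H - 1/2 - 1 = H - 3/2 from by ring, mul_comm (H - 1/2), mul_assoc, mul_one_div,
        div_self hp.ne', mul_one]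
    have h5 : (s/2 : ℝ) ^ (H - 3/2) ≤ 2 * s ^ (H - 3/2) := by
      have e : (s/2:ℝ) ^ (H - 3/2) = s ^ (H - 3/2) * (2:ℝ) ^ (-(H - 3/2)) := by
        rw [div_eq_mul_inv, Real.mul_rpow hs.le (by norm_num),
          Real.inv_rpow (by norm_num : (0:ℝ) ≤ 2), ← Real.rpow_neg (by norm_num : (0:ℝ) ≤ 2)]
      rw [e]
      have h2le : (2:ℝ) ^ (-(H - 3/2)) ≤ 2 ^ (1:ℝ) :=
        Real.rpow_le_rpow_of_exponent_le one_le_two (by linarith)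
      rw [Real.rpow_one] at h2le
      nlinarith [Real.rpow_nonneg hs.le (H - 3/2), Real.rpow_pos_of_pos hs (H - 3/2)]
    calc |∫ x in (0:ℝ)..1, F' s x| ≤ _ := h1
      _ ≤ _ := h2
      _ = _ := h3
      _ ≤ _ := h5
  · -- h_bound
    refine Filter.Eventually.of_forall fun x hx => ?_
    rw [Set.uIoc_of_le (zero_le_one' ℝ)] at hx
    intro r hr
    rw [Real.norm_eq_abs]
    exact hFbd r (hball r hr) x hx
  · -- h_diff
    refine Filter.Eventually.of_forall fun x hx => ?_
    rw [Set.uIoc_of_le (zero_le_one' ℝ)] at hx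
    intro r hr
    have hin := hball r hr x hx
    have hne : r + (t - r) * x ≠ 0 := by
      have : (0:ℝ) < s/2 := by positivity
      linarith
    have hl : HasDerivAt (fun r' : ℝ => r' + (t - r') * x) (1 - x) r := by
      have h := (hasDerivAt_id r).add (((hasDerivAt_id r).const_sub t).mul_const x)
      exact h.congr_deriv (by ring)
    exact (hl.rpow_const (Or.inl hne)).mul_const _
lemma cov_lemma {p q s t : ℝ} (_hs : 0 ≤ s) (hst : s < t) :
    (∫ u in s..t, u ^ p * (u - s) ^ q) =
      (t - s) ^ (q + 1) * ∫ x in (0:ℝ)..1, (s + (t - s) * x) ^ p * x ^ q := by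
  have hd : 0 < t - s := sub_pos.2 hst
  have h1 := intervalIntegral.integral_comp_mul_add (a := (0:ℝ)) (b := 1)
    (fun u => u ^ p * (u - s) ^ q) hd.ne' s
  simp only [mul_zero, zero_add, mul_one] at h1
  have h1' : (∫ u in s..t, u ^ p * (u - s) ^ q) =
      (t - s) * ∫ x in (0:ℝ)..1, ((t - s) * x + s) ^ p * ((t - s) * x + s - s) ^ q := by
    rw [h1, smul_eq_mul, ← mul_assoc, mul_inv_cancel₀ hd.ne', one_mul]
    norm_num
  rw [h1']
  have h2 : (∫ x in (0:ℝ)..1, ((t - s) * x + s) ^ p * ((t - s) * x + s - s) ^ q) =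
      ∫ x in (0:ℝ)..1, (t - s) ^ q * ((s + (t - s) * x) ^ p * x ^ q) := by
    apply intervalIntegral.integral_congr
    intro x hx
    rw [Set.uIcc_of_le (zero_le_one' ℝ)] at hx
    have hx0 : 0 ≤ x := hx.1
    show ((t - s) * x + s) ^ p * ((t - s) * x + s - s) ^ q = _
    have e : (t - s) * x + s - s = (t - s) * x := by ring
    rw [e, Real.mul_rpow hd.le hx0, show (t - s) * x + s = s + (t - s) * x from by ring]
    ring
  rw [h2, intervalIntegral.integral_const_mul, ← mul_assoc, Real.rpow_add_one hd.ne', mul_comm ((t-s)^q) (t-s)]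
-- upper bound for I₁
lemma I1_bounds {H t s : ℝ} (hH1 : 1/2 < H) (hH2 : H < 1) (hs : 0 < s) (hst : s < t) :
    0 ≤ (∫ x in (0:ℝ)..1, (s + (t - s) * x) ^ (H - 1/2) * x ^ (H - 3/2)) ∧
    (H - 1/2) * (∫ x in (0:ℝ)..1, (s + (t - s) * x) ^ (H - 1/2) * x ^ (H - 3/2)) ≤
      t ^ (H - 1/2) := by
  have hp : (0:ℝ) < H - 1/2 := by linarith
  have hq : (-1:ℝ) < H - 3/2 := by linarith
  have ht : (0:ℝ) < t := hs.trans hst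
  have hd : (0:ℝ) < t - s := by linarith
  constructor
  · apply intervalIntegral.integral_nonneg zero_le_one
    intro x hx
    have : 0 ≤ s + (t - s) * x := by nlinarith [hx.1]
    exact mul_nonneg (Real.rpow_nonneg this _) (Real.rpow_nonneg hx.1 _)
  · have hmono : (∫ x in (0:ℝ)..1, (s + (t - s) * x) ^ (H - 1/2) * x ^ (H - 3/2)) ≤
        ∫ x in (0:ℝ)..1, t ^ (H - 1/2) * x ^ (H - 3/2) := by
      apply intervalIntegral.integral_mono_on zero_le_one
        (integrable_F hp.le hq hs ht) (rpow_int_integrable hq _)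
      intro x hx
      have hb0 : 0 ≤ s + (t - s) * x := by nlinarith [hx.1]
      have hb1 : s + (t - s) * x ≤ t := by nlinarith [hx.2]
      exact mul_le_mul_of_nonneg_right (Real.rpow_le_rpow hb0 hb1 hp.le)
        (Real.rpow_nonneg hx.1 _)
    have hIq : (∫ x in (0:ℝ)..1, x ^ (H - 3/2)) = 1/(H - 1/2) := by
      rw [integral_rpow (Or.inl hq), show H - 3/2 + 1 = H - 1/2 from by ring, Real.one_rpow,
        Real.zero_rpow hp.ne']
      norm_num
    have : (∫ x in (0:ℝ)..1, t ^ (H - 1/2) * x ^ (H - 3/2)) = t ^ (H - 1/2) * (1/(H - 1/2)) := by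
      rw [intervalIntegral.integral_const_mul, hIq]
    rw [this] at hmono
    calc (H - 1/2) * (∫ x in (0:ℝ)..1, (s + (t - s) * x) ^ (H - 1/2) * x ^ (H - 3/2)) ≤
        (H - 1/2) * (t ^ (H - 1/2) * (1/(H - 1/2))) := mul_le_mul_of_nonneg_left hmono hp.le
      _ = t ^ (H - 1/2) := by
        rw [mul_comm (t ^ (H - 1/2)) (1/(H - 1/2)), ← mul_assoc, mul_one_div,
          div_self hp.ne', one_mul]

-- lower bound for the second kernel integral
lemma rho2_lower {H t s : ℝ} (hH1 : 1/2 < H) (hH2 : H < 1) (hs : 0 < s) (hst : s < t) :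
    t ^ (H - 3/2) * ((t - s) ^ (H + 1/2) / (H + 1/2)) ≤
      ∫ u in s..t, u ^ (H - 3/2) * (u - s) ^ (H - 1/2) := by
  have hp : (0:ℝ) < H - 1/2 := by linarith
  have ht : (0:ℝ) < t := hs.trans hst
  have hd : (0:ℝ) < t - s := by linarith
  have hcont : ContinuousOn (fun u : ℝ => u ^ (H - 3/2) * (u - s) ^ (H - 1/2)) (uIcc s t) := by
    rw [uIcc_of_le hst.le]
    apply ContinuousOn.mul
    · exact ContinuousOn.rpow_const continuousOn_id (fun u hu => Or.inl (by
        have := hu.1; intro h; rw [h] at this; exact absurd this (not_le.2 hs)))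
    · exact ContinuousOn.rpow_const (continuousOn_id.sub continuousOn_const)
        (fun u hu => Or.inr hp.le)
  have hcont2 : ContinuousOn (fun u : ℝ => t ^ (H - 3/2) * (u - s) ^ (H - 1/2)) (uIcc s t) :=
    ContinuousOn.mul continuousOn_const (ContinuousOn.rpow_const
      (continuousOn_id.sub continuousOn_const) (fun u hu => Or.inr hp.le))
  have hpt : ∀ u ∈ Icc s t, t ^ (H - 3/2) * (u - s) ^ (H - 1/2) ≤
      u ^ (H - 3/2) * (u - s) ^ (H - 1/2) := by
    intro u hu
    have hu0 : 0 < u := lt_of_lt_of_le hs hu.1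
    have : t ^ (H - 3/2) ≤ u ^ (H - 3/2) :=
      Real.rpow_le_rpow_of_nonpos hu0 hu.2 (by linarith)
    exact mul_le_mul_of_nonneg_right this (Real.rpow_nonneg (by linarith [hu.1]) _)
  have hmono := intervalIntegral.integral_mono_on (μ := volume) hst.le hcont2.intervalIntegrable
    hcont.intervalIntegrable hpt
  refine le_trans (le_of_eq ?_) hmono
  rw [intervalIntegral.integral_const_mul]
  congr 1
  have : (∫ u in s..t, (u - s) ^ (H - 1/2)) = ∫ v in (0:ℝ)..(t - s), v ^ (H - 1/2) := by
    rw [intervalIntegral.integral_comp_sub_right (fun v => v ^ (H - 1/2)) s]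
    norm_num
  rw [this, integral_rpow (Or.inl (by linarith)), show H - 1/2 + 1 = H + 1/2 from by ring,
    Real.zero_rpow (show (0:ℝ) < H + 1/2 by linarith).ne']
  ring

/-- The usual normalizing constant `d_H` of the Volterra kernel representation of
fractional Brownian motion. -/
def dConst (H : ℝ) : ℝ :=
  Real.sqrt (2 * H * Real.Gamma (3 / 2 - H) /
    (Real.Gamma (H + 1 / 2) * Real.Gamma (2 - 2 * H)))

/-- The Volterra kernel `K_H(t,s) = d_H s^{1/2−H} ∫_s^t u^{H−1/2}(u−s)^{H−3/2} du`. -/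
def KH (H : ℝ) (t s : ℝ) : ℝ :=
  dConst H * s ^ ((1 : ℝ) / 2 - H) *
    ∫ u in s..t, u ^ (H - 1 / 2) * (u - s) ^ (H - 3 / 2)

/-- `ρ_H(t,s) = ∂_s K_H(t,s)`. -/
def rhoH (H : ℝ) (t s : ℝ) : ℝ := deriv (fun r => KH H t r) s

/-- For `1/2 < H < 1` and `T > 0` there is a constant `C`, depending
only on `H` and `T`, such that `|ρ_H(t,s)| ≤ C (ρ_{H,1}(t,s) + ρ_{H,2}(t,s))` for all
`0 < s < t ≤ T`, where `ρ_{H,1}(t,s) = t^{H−1/2} s^{1/2−H} (t−s)^{H−3/2}` and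
`ρ_{H,2}(t,s) = s^{−H−1/2} ∫_s^t u^{H−3/2}(u−s)^{H−1/2} du`. -/
theorem rhoH_kernel_bound (H T : ℝ) (hH1 : 1 / 2 < H) (hH2 : H < 1) (hT : 0 < T) :
    ∃ C : ℝ, 0 ≤ C ∧ ∀ s t : ℝ, 0 < s → s < t → t ≤ T →
      |rhoH H t s| ≤
        C * (t ^ (H - 1 / 2) * s ^ ((1 : ℝ) / 2 - H) * (t - s) ^ (H - 3 / 2) +
          s ^ (-H - 1 / 2) * ∫ u in s..t, u ^ (H - 3 / 2) * (u - s) ^ (H - 1 / 2)) := by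
  refine ⟨10 * |dConst H|, by positivity, ?_⟩
  intro s t hs hst htT
  have ht : 0 < t := hs.trans hst
  have hd : 0 < t - s := sub_pos.2 hst
  have hp : (0:ℝ) < H - 1/2 := by linarith
  obtain ⟨D, hD, hIder⟩ := hasDeriv_I1 hH1 hH2 hs hst
  obtain ⟨hI1nn, hI1ub⟩ := I1_bounds hH1 hH2 hs hst
  have hRlb := rho2_lower hH1 hH2 hs hst
  set I1 : ℝ := ∫ x in (0:ℝ)..1, (s + (t - s) * x) ^ (H - 1/2) * x ^ (H - 3/2) with hI1def
  set R : ℝ := ∫ u in s..t, u ^ (H - 3/2) * (u - s) ^ (H - 1/2) with hRdef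
  -- derivative of the reparametrized kernel
  have hA : HasDerivAt (fun r : ℝ => r ^ ((1:ℝ)/2 - H)) (((1:ℝ)/2 - H) * s ^ ((1:ℝ)/2 - H - 1)) s :=
    Real.hasDerivAt_rpow_const (Or.inl hs.ne')
  have hB : HasDerivAt (fun r : ℝ => (t - r) ^ (H - 1/2))
      (-((H - 1/2) * (t - s) ^ (H - 1/2 - 1))) s := by
    have h1 : HasDerivAt (fun r : ℝ => t - r) (-1) s := (hasDerivAt_id s).const_sub t
    have h2 := h1.rpow_const (p := H - 1/2) (Or.inl hd.ne')
    convert h2 using 1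
    ring
  have hKder := ((hA.mul (hB.mul hIder)).const_mul (dConst H))
  have hev : (fun r => KH H t r) =ᶠ[𝓝 s] (fun r => dConst H * (r ^ ((1:ℝ)/2 - H) *
      ((t - r) ^ (H - 1/2) *
        ∫ x in (0:ℝ)..1, (r + (t - r) * x) ^ (H - 1/2) * x ^ (H - 3/2)))) := by
    filter_upwards [Ioo_mem_nhds hs hst] with r hr
    show KH H t r = _
    rw [KH, cov_lemma hr.1.le hr.2, show H - 3/2 + 1 = H - 1/2 from by ring]
    ring
  have hval : rhoH H t s = dConst H * (((1:ℝ)/2 - H) * s ^ ((1:ℝ)/2 - H - 1) *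
      ((t - s) ^ (H - 1/2) * I1) +
      s ^ ((1:ℝ)/2 - H) * (-((H - 1/2) * (t - s) ^ (H - 1/2 - 1)) * I1 +
        (t - s) ^ (H - 1/2) * D)) := by
    rw [rhoH]
    exact hev.deriv_eq.trans hKder.deriv
  rw [show (1:ℝ)/2 - H - 1 = -H - 1/2 from by ring,
    show H - 1/2 - 1 = H - 3/2 from by ring] at hval
  -- abbreviations for the rpow atoms
  set A : ℝ := s ^ (-H - 1/2 : ℝ) with hA'
  set B : ℝ := s ^ ((1:ℝ)/2 - H) with hB'
  set C1 : ℝ := (t - s) ^ (H - 1/2) with hC1'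
  set C2 : ℝ := (t - s) ^ (H - 3/2) with hC2'
  set C3 : ℝ := (t - s) ^ (H + 1/2) with hC3'
  set Ut : ℝ := t ^ (H - 1/2) with hUt'
  set Vt : ℝ := t ^ (H - 3/2) with hVt'
  set W : ℝ := s ^ (H - 3/2) with hW'
  have pA : 0 < A := Real.rpow_pos_of_pos hs _
  have pB : 0 < B := Real.rpow_pos_of_pos hs _
  have pC1 : 0 < C1 := Real.rpow_pos_of_pos hd _
  have pC2 : 0 < C2 := Real.rpow_pos_of_pos hd _
  have pC3 : 0 < C3 := Real.rpow_pos_of_pos hd _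
  have pUt : 0 < Ut := Real.rpow_pos_of_pos ht _
  have pVt : 0 < Vt := Real.rpow_pos_of_pos ht _
  have pW : 0 < W := Real.rpow_pos_of_pos hs _
  -- algebraic relations between the atoms
  have eB : B = A * s := by
    rw [hB', hA', show (1:ℝ)/2 - H = (-H - 1/2) + 1 from by ring, Real.rpow_add_one hs.ne']
  have eC1 : C1 = C2 * (t - s) := by
    rw [hC1', hC2', show H - 1/2 = (H - 3/2) + 1 from by ring, Real.rpow_add_one hd.ne']
  have eC3 : C3 = C1 * (t - s) := by
    rw [hC3', hC1', show H + 1/2 = (H - 1/2) + 1 from by ring, Real.rpow_add_one hd.ne']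
  have eUt : Ut = Vt * t := by
    rw [hUt', hVt', show H - 1/2 = (H - 3/2) + 1 from by ring, Real.rpow_add_one ht.ne']
  have eBW : B * W * s = 1 := by
    rw [hB', hW', ← Real.rpow_add hs, show (1:ℝ)/2 - H + (H - 3/2) = -1 from by ring,
      Real.rpow_neg_one]
    field_simp
  have eAZ : A * s ^ (H - 1/2) * s = 1 := by
    rw [hA', ← Real.rpow_add hs, show -H - 1/2 + (H - 1/2) = -1 from by ring,
      Real.rpow_neg_one]
    field_simp
  have eZB : s ^ (H - 1/2) * B = 1 := by
    rw [hB', ← Real.rpow_add hs, show H - 1/2 + ((1:ℝ)/2 - H) = 0 from by ring, Real.rpow_zero]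
  have eZle : s ^ (H - 1/2) ≤ Ut := Real.rpow_le_rpow hs.le hst.le hp.le
  have pZ : 0 < s ^ (H - 1/2) := Real.rpow_pos_of_pos hs _
  have hRnn : 0 ≤ R := le_trans (by positivity) hRlb
  have hVC3R : Vt * C3 ≤ (3/2) * R := by
    have h1 : C3 * (2/3) ≤ C3 / (H + 1/2) := by
      rw [div_eq_mul_inv]
      apply mul_le_mul_of_nonneg_left _ pC3.le
      have hpos : (0:ℝ) < H + 1/2 := by linarith
      have h33 : ((3:ℝ)/2)⁻¹ ≤ (H + 1/2)⁻¹ := by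
        apply inv_anti₀ hpos
        linarith
      calc (2:ℝ)/3 = ((3:ℝ)/2)⁻¹ := by norm_num
        _ ≤ _ := h33
    have h2 : Vt * (C3 * (2/3)) ≤ Vt * (C3 / (H + 1/2)) := mul_le_mul_of_nonneg_left h1 pVt.le
    have h4 : Vt * (C3 * (2/3)) ≤ R := by
      exact h2.trans hRlb
    linarith
  -- triangle inequality
  have habs : |rhoH H t s| ≤ |dConst H| * ((H - 1/2) * A * (C1 * I1) +
      B * ((H - 1/2) * C2 * I1 + C1 * (2 * W))) := by
    rw [hval, abs_mul]
    apply mul_le_mul_of_nonneg_left _ (abs_nonneg _)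
    refine (abs_add_le _ _).trans (add_le_add ?_ ?_)
    · rw [abs_mul, abs_mul, abs_of_neg (by linarith : (1:ℝ)/2 - H < 0), abs_of_pos pA,
        abs_of_nonneg (mul_nonneg pC1.le hI1nn)]
      apply le_of_eq
      ring
    · rw [abs_mul, abs_of_pos pB]
      apply mul_le_mul_of_nonneg_left _ pB.le
      refine (abs_add_le _ _).trans (add_le_add ?_ ?_)
      · rw [abs_mul, abs_neg, abs_mul, abs_of_nonneg hp.le, abs_of_pos pC2,
          abs_of_nonneg hI1nn]
      · rw [abs_mul, abs_of_pos pC1]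
        exact mul_le_mul_of_nonneg_left hD pC1.le
  refine habs.trans ?_
  rw [show 10 * |dConst H| * (Ut * B * C2 + A * R) = |dConst H| * (10 * (Ut * B * C2 + A * R))
    from by ring]
  apply mul_le_mul_of_nonneg_left _ (abs_nonneg _)
  -- bound each of the three terms
  have hT2 : B * ((H - 1/2) * C2 * I1) ≤ Ut * B * C2 := by
    calc B * ((H - 1/2) * C2 * I1) = (B * C2) * ((H - 1/2) * I1) := by ring
      _ ≤ (B * C2) * Ut := mul_le_mul_of_nonneg_left hI1ub (by positivity)
      _ = Ut * B * C2 := by ring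
  have hT3eq : B * (C1 * (2 * W)) = 2 * ((B * W) * C1) := by ring
  rcases le_total (t - s) s with hc | hc
  · -- case t - s ≤ s
    have hT1 : (H - 1/2) * A * (C1 * I1) ≤ Ut * B * C2 := by
      calc (H - 1/2) * A * (C1 * I1) = (A * C1) * ((H - 1/2) * I1) := by ring
        _ ≤ (A * C1) * Ut := mul_le_mul_of_nonneg_left hI1ub (by positivity)
        _ = (A * C2 * Ut) * (t - s) := by rw [eC1]; ring
        _ ≤ (A * C2 * Ut) * s := mul_le_mul_of_nonneg_left hc (by positivity)
        _ = Ut * (A * s) * C2 := by ring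
        _ = Ut * B * C2 := by rw [← eB]
    have hT3 : B * (C1 * (2 * W)) ≤ 2 * (Ut * B * C2) := by
      rw [hT3eq]
      calc 2 * ((B * W) * C1) = 2 * ((B * W) * (C2 * (t - s))) := by rw [← eC1]
        _ = 2 * C2 * ((B * W) * (t - s)) := by ring
        _ ≤ 2 * C2 * ((B * W) * s) := by
            apply mul_le_mul_of_nonneg_left _ (by positivity : (0:ℝ) ≤ 2 * C2)
            exact mul_le_mul_of_nonneg_left hc (by positivity)
        _ = 2 * C2 * (B * W * s) := by ring
        _ = 2 * C2 * 1 := by rw [eBW]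
        _ = 2 * (C2 * (s ^ (H - 1/2) * B)) := by rw [eZB]; ring
        _ ≤ 2 * (C2 * (Ut * B)) := by
            apply mul_le_mul_of_nonneg_left _ (by norm_num)
            exact mul_le_mul_of_nonneg_left (mul_le_mul_of_nonneg_right eZle pB.le)
              pC2.le
        _ = 2 * (Ut * B * C2) := by ring
    have hAR : 0 ≤ A * R := mul_nonneg pA.le hRnn
    have hX : 0 < Ut * B * C2 := by positivity
    linarith
  · -- case s ≤ t - s
    have ht2 : t ≤ 2 * (t - s) := by linarith
    have hT1 : (H - 1/2) * A * (C1 * I1) ≤ 3 * (A * R) := by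
      calc (H - 1/2) * A * (C1 * I1) = (A * C1) * ((H - 1/2) * I1) := by ring
        _ ≤ (A * C1) * Ut := mul_le_mul_of_nonneg_left hI1ub (by positivity)
        _ = (A * C1 * Vt) * t := by rw [eUt]; ring
        _ ≤ (A * C1 * Vt) * (2 * (t - s)) := mul_le_mul_of_nonneg_left ht2 (by positivity)
        _ = 2 * A * (Vt * (C1 * (t - s))) := by ring
        _ = 2 * A * (Vt * C3) := by rw [← eC3]
        _ ≤ 2 * A * ((3/2) * R) := by
            apply mul_le_mul_of_nonneg_left hVC3R (by positivity)
        _ = 3 * (A * R) := by ring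
    have hT3 : B * (C1 * (2 * W)) ≤ 6 * (A * R) := by
      rw [hT3eq]
      have eBWA : B * W = A * s ^ (H - 1/2) := by
        have h1 : B * W * s = A * s ^ (H - 1/2) * s := by rw [eBW, eAZ]
        exact mul_right_cancel₀ hs.ne' h1
      calc 2 * ((B * W) * C1) = 2 * ((A * s ^ (H - 1/2)) * C1) := by rw [eBWA]
        _ ≤ 2 * ((A * Ut) * C1) := by
            apply mul_le_mul_of_nonneg_left _ (by norm_num)
            exact mul_le_mul_of_nonneg_right
              (mul_le_mul_of_nonneg_left eZle pA.le) pC1.le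
        _ = 2 * A * C1 * Vt * t := by rw [eUt]; ring
        _ ≤ 2 * A * C1 * Vt * (2 * (t - s)) := mul_le_mul_of_nonneg_left ht2 (by positivity)
        _ = 4 * A * (Vt * (C1 * (t - s))) := by ring
        _ = 4 * A * (Vt * C3) := by rw [← eC3]
        _ ≤ 4 * A * ((3/2) * R) := by
            apply mul_le_mul_of_nonneg_left hVC3R (by positivity)
        _ = 6 * (A * R) := by ring
    have hρ1 : 0 ≤ Ut * B * C2 := by positivity
    have hAR : 0 ≤ A * R := mul_nonneg pA.le hRnn
    linarith
end
end
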